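/- arXiv:math/0502134 — 2 statements merged into one kernel-verified Lean document; each statement's English description precedes it below -/
import Mathlib

section
/- (Character distribution relation.) For every integer k ≥ 0, the limit H_{k,χ}^{(r)}(u,q|a_1,…,a_r) := lim_{N→∞} ((1−u)/(1−u^{d·p^N}))^r · Σ_{x_1=0}^{dp^N−1} ⋯ Σ_{x_r=0}^{dp^N−1} (Π_{j=1}^r χ(x_j)) · [a_1x_1+⋯+a_rx_r : q]^k · u^{x_1+⋯+x_r} exists in ℂ_p, and (1−u)^{−r} · H_{k,χ}^{(r)}(u,q|a_1,…,a_r) = (1−u^d)^{−r} · [d:q]^k · Σ_{i_1=0}^{d−1} ⋯ Σ_{i_r=0}^{d−1} u^{i_1+⋯+i_r} (Π_{j=1}^r χ(i_j)) · H̃_k(i_1,…,i_r), where H̃_k(i⃗) := (1−u^d)^r (1−q^d)^{−k} Σ_{l=0}^k binom(k,l)(−1)^l q^{l(a_1i_1+⋯+a_ri_r)} Π_{j=1}^r (1−q^{d·l·a_j} u^d)^{−1} (this is H_k^{(r)}(Σ_j a_j i_j / d, u^d, q^d | a_1,…,a_r) with the power (q^d)^{l·Σ_j a_j i_j/d} read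 as q^{l·Σ_j a_j i_j}). -/
open Filter Finset

/-- For `q` in a normed field and a `p`-adic integer `z`, the power `q^z`, defined as the
limit of `q^(z mod p^N)` (for convergent `q` this agrees with `exp_p (z · log_p q)`). -/
noncomputable def qpow {p : ℕ} [Fact p.Prime] {K : Type*} [NormedField K] (q : K) (z : ℤ_[p]) :
    K :=
  limUnder atTop fun N : ℕ => q ^ (z.appr N)

/-- The `q`-number `[z : q] = (1 - q^z)/(1 - q)` for a `p`-adic integer `z`. -/
noncomputable def qnum {p : ℕ} [Fact p.Prime] {K : Type*} [NormedField K] (q : K) (z : ℤ_[p]) :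
    K :=
  (1 - qpow q z) / (1 - q)

/-- The `q`-analogue of the Euler–Barnes polynomial
`H_n^{(r)}(w, u, q | a_1, …, a_r)
  = (1-u)^r (1-q)^{-n} ∑_{l=0}^n C(n,l) (-1)^l q^{lw} ∏_j (1 - q^{l a_j} u)⁻¹`. -/
noncomputable def qEulerBarnes {p : ℕ} [Fact p.Prime] {K : Type*} [NormedField K]
    (r n : ℕ) (w : ℤ_[p]) (u q : K) (a : Fin r → ℤ_[p]) : K :=
  (1 - u) ^ r * ((1 - q)⁻¹) ^ n *
    ∑ l ∈ Finset.range (n + 1),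
      (n.choose l : K) * (-1) ^ l * qpow q ((l : ℤ_[p]) * w) *
        ∏ j, (1 - qpow q ((l : ℤ_[p]) * a j) * u)⁻¹

open Topology


section Units
variable {K : Type*} [NormedField K] [IsUltrametricDist K]

lemma unit_norm_le_one {x : K} (h : ‖x - 1‖ ≤ 1) : ‖x‖ ≤ 1 := by
  calc ‖x‖ = ‖(x - 1) + 1‖ := by ring_nf
  _ ≤ max ‖x - 1‖ ‖(1 : K)‖ := IsUltrametricDist.norm_add_le_max _ _
  _ ≤ 1 := by simp [h]

lemma unit_pow_sub_one {x : K} (h : ‖x - 1‖ ≤ 1) (m : ℕ) : ‖x ^ m - 1‖ ≤ ‖x - 1‖ := by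
  induction m with
  | zero => simpa using norm_sub_nonneg x 1
  | succ n ih =>
    have : x ^ (n + 1) - 1 = x ^ n * (x - 1) + (x ^ n - 1) := by ring
    rw [this]
    refine (IsUltrametricDist.norm_add_le_max _ _).trans (max_le ?_ ih)
    rw [norm_mul, norm_pow]
    calc ‖x‖ ^ n * ‖x - 1‖ ≤ 1 * ‖x - 1‖ := by
          gcongr
          exact pow_le_one₀ (norm_nonneg _) (unit_norm_le_one h)
    _ = ‖x - 1‖ := one_mul _

variable {p : ℕ} [Fact p.Prime]

lemma unit_pow_p_sub_one {x : K} {c : ℝ} (hx1 : ‖x - 1‖ ≤ 1)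
    (hpc : ‖(p : K)‖ ≤ c) (hxc : ‖x - 1‖ ^ (p - 1) ≤ c) :
    ‖x ^ p - 1‖ ≤ c * ‖x - 1‖ := by
  have hp := (Fact.out : p.Prime)
  have hx0 : (0:ℝ) ≤ ‖x - 1‖ := norm_nonneg _
  have hc0 : (0:ℝ) ≤ c := le_trans (norm_nonneg _) hpc
  have hexp : x ^ p - 1 = ∑ i ∈ Finset.range p, (x - 1) ^ (i + 1) * (p.choose (i + 1) : K) := by
    have h1 : x ^ p = ((x - 1) + 1) ^ p := by ring_nf
    rw [h1, add_pow]
    simp only [one_pow, mul_one]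
    rw [Finset.sum_range_succ' (fun i => (x - 1) ^ i * (p.choose i : K))]
    simp
  rw [hexp]
  refine IsUltrametricDist.norm_sum_le_of_forall_le_of_nonneg
    (by positivity) (fun i hi => ?_)
  rw [Finset.mem_range] at hi
  rw [norm_mul, norm_pow]
  rcases eq_or_lt_of_le (Nat.succ_le_of_lt hi) with he | hlt
  · -- i + 1 = p
    rw [← he]
    simp only [Nat.choose_self, Nat.cast_one, norm_one, mul_one]
    have : i = p - 1 + 1 - 1 := by omega
    calc ‖x - 1‖ ^ (i + 1) = ‖x - 1‖ ^ (p - 1) * ‖x - 1‖ := by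
          rw [← pow_succ]; congr 1; omega
    _ ≤ c * ‖x - 1‖ := by gcongr
  · -- i + 1 < p
    have hdvd : p ∣ p.choose (i + 1) := hp.dvd_choose_self (Nat.succ_ne_zero i) hlt
    obtain ⟨m, hm⟩ := hdvd
    have hnorm : ‖(p.choose (i + 1) : K)‖ ≤ c := by
      rw [hm]
      push_cast
      rw [norm_mul]
      calc ‖(p:K)‖ * ‖(m:K)‖ ≤ c * 1 := by
            gcongr
            exact IsUltrametricDist.norm_natCast_le_one K m
      _ = c := mul_one c
    calc ‖x - 1‖ ^ (i + 1) * ‖(p.choose (i+1) : K)‖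
        ≤ ‖x - 1‖ ^ 1 * c :=
          mul_le_mul (pow_le_pow_of_le_one hx0 hx1 (by omega)) hnorm (norm_nonneg _)
            (by positivity)
    _ = c * ‖x - 1‖ := by ring

end Units
section Units2
variable {K : Type*} [NormedField K] [IsUltrametricDist K] {p : ℕ} [Fact p.Prime]

lemma unit_pow_p_pow {x : K} {c : ℝ} (hc1 : c ≤ 1) (hx1 : ‖x - 1‖ ≤ 1)
    (hpc : ‖(p : K)‖ ≤ c) (hxc : ‖x - 1‖ ^ (p - 1) ≤ c) (N : ℕ) :
    ‖x ^ p ^ N - 1‖ ≤ c ^ N * ‖x - 1‖ := by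
  have hc0 : (0:ℝ) ≤ c := le_trans (norm_nonneg _) hpc
  induction N with
  | zero => simp
  | succ n ih =>
    have hy1 : ‖x ^ p ^ n - 1‖ ≤ ‖x - 1‖ := by
      refine ih.trans ?_
      calc c ^ n * ‖x - 1‖ ≤ 1 * ‖x - 1‖ := by
            gcongr; exact pow_le_one₀ hc0 hc1
      _ = ‖x - 1‖ := one_mul _
    have := unit_pow_p_sub_one (p := p) (hy1.trans hx1) hpc
      ((pow_le_pow_left₀ (norm_nonneg _) hy1 (p-1)).trans hxc)
    calc ‖x ^ p ^ (n+1) - 1‖ = ‖(x ^ p ^ n) ^ p - 1‖ := by rw [← pow_mul, pow_succ]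
    _ ≤ c * ‖x ^ p ^ n - 1‖ := this
    _ ≤ c * (c ^ n * ‖x - 1‖) := by gcongr
    _ = c ^ (n+1) * ‖x - 1‖ := by ring

lemma unit_pow_modEq {x : K} {c : ℝ} (hc1 : c ≤ 1) (hx1 : ‖x - 1‖ ≤ 1)
    (hpc : ‖(p : K)‖ ≤ c) (hxc : ‖x - 1‖ ^ (p - 1) ≤ c) (N : ℕ) {a b : ℕ}
    (hab : a ≡ b [MOD p ^ N]) : ‖x ^ a - x ^ b‖ ≤ c ^ N * ‖x - 1‖ := by
  have hc0 : (0:ℝ) ≤ c := le_trans (norm_nonneg _) hpc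
  have key : ∀ a b : ℕ, b ≤ a → a ≡ b [MOD p ^ N] → ‖x ^ a - x ^ b‖ ≤ c ^ N * ‖x - 1‖ := by
    intro a b hba h
    obtain ⟨m, hm⟩ := (Nat.modEq_iff_dvd' hba).mp h.symm
    have ha : a = b + p ^ N * m := by omega
    have h1 : x ^ a - x ^ b = x ^ b * ((x ^ p ^ N) ^ m - 1) := by
      rw [ha, pow_add, pow_mul]; ring
    rw [h1, norm_mul]
    have hply : ‖x ^ p ^ N - 1‖ ≤ c ^ N * ‖x - 1‖ := unit_pow_p_pow hc1 hx1 hpc hxc N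
    have h2 : ‖(x ^ p ^ N) ^ m - 1‖ ≤ ‖x ^ p ^ N - 1‖ := by
      refine unit_pow_sub_one (hply.trans ?_) m
      calc c ^ N * ‖x - 1‖ ≤ 1 * 1 :=
            mul_le_mul (pow_le_one₀ hc0 hc1) hx1 (norm_nonneg _) zero_le_one
      _ = 1 := one_mul _
    calc ‖x ^ b‖ * ‖(x ^ p ^ N) ^ m - 1‖ ≤ 1 * (c ^ N * ‖x - 1‖) :=
          mul_le_mul ((norm_pow x b).le.trans (pow_le_one₀ (norm_nonneg _) (unit_norm_le_one hx1))) (h2.trans hply)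
            (norm_nonneg _) zero_le_one
    _ = c ^ N * ‖x - 1‖ := one_mul _
  rcases le_total b a with h | h
  · exact key a b h hab
  · rw [norm_sub_rev]; exact key b a h hab.symm

lemma nat_modEq_of_padic {p : ℕ} [Fact p.Prime] {a b N : ℕ}
    (h : (a : ℤ_[p]) - (b : ℤ_[p]) ∈ Ideal.span {(p : ℤ_[p]) ^ N}) :
    a ≡ b [MOD p ^ N] := by
  have h1 : ((a - b : ℤ) : ℤ_[p]) ∈ Ideal.span {(p : ℤ_[p]) ^ N} := by push_cast; exact h
  rw [← PadicInt.norm_le_pow_iff_mem_span_pow] at h1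
  have h2 : ((p : ℤ) ^ N) ∣ (a - b : ℤ) :=
    PadicInt.norm_int_le_pow_iff_dvd.mp (by exact_mod_cast h1)
  rw [Nat.modEq_iff_dvd]
  push_cast
  exact dvd_sub_comm.mp h2

end Units2
section Qpow
variable {p : ℕ} [Fact p.Prime] {K : Type*} [NormedField K] [IsUltrametricDist K]
  [CompleteSpace K] {q : K} {c : ℝ}

lemma appr_sub_mem (z : ℤ_[p]) (N : ℕ) :
    ((z.appr N : ℤ_[p]) - z) ∈ Ideal.span {(p : ℤ_[p]) ^ N} := by
  have := PadicInt.appr_spec N z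
  simpa using neg_mem this

lemma qpow_tendsto_of (hc : c < 1) (hq1 : ‖q - 1‖ ≤ 1) (hpc : ‖(p : K)‖ ≤ c)
    (hqc : ‖q - 1‖ ^ (p - 1) ≤ c) (z : ℤ_[p]) {f : ℕ → ℕ}
    (hf : ∀ N, ((f N : ℤ_[p]) - z) ∈ Ideal.span {(p : ℤ_[p]) ^ N}) :
    Tendsto (fun N => q ^ f N) atTop (𝓝 (qpow q z)) := by
  have hc0 : (0:ℝ) ≤ c := le_trans (norm_nonneg _) hpc
  set g : ℕ → K := fun N => q ^ z.appr N with hg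
  have hmod : ∀ N, z.appr (N + 1) ≡ z.appr N [MOD p ^ N] := by
    intro N
    refine nat_modEq_of_padic ?_
    have h1 : ((z.appr (N+1) : ℤ_[p]) - z) ∈ Ideal.span {(p : ℤ_[p]) ^ N} := by
      refine Ideal.span_singleton_le_span_singleton.mpr ⟨(p : ℤ_[p]), by ring⟩
        (appr_sub_mem z (N+1))
    have h2 := appr_sub_mem z N
    have : ((z.appr (N+1) : ℤ_[p]) - z.appr N)
        = ((z.appr (N+1) : ℤ_[p]) - z) - ((z.appr N : ℤ_[p]) - z) := by ring
    rw [this]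
    exact Ideal.sub_mem _ h1 h2
  have hcauchy : CauchySeq g := by
    refine cauchySeq_of_le_geometric c ‖q - 1‖ hc (fun n => ?_)
    rw [dist_eq_norm, hg]
    calc ‖q ^ z.appr n - q ^ z.appr (n+1)‖ ≤ c ^ n * ‖q - 1‖ :=
          unit_pow_modEq (le_of_lt hc) hq1 hpc hqc n (hmod n).symm
    _ = ‖q - 1‖ * c ^ n := mul_comm _ _
  have hlim : Tendsto g atTop (𝓝 (qpow q z)) := hcauchy.tendsto_limUnder
  refine tendsto_of_tendsto_of_dist hlim ?_
  have hbd : ∀ N, dist (g N) (q ^ f N) ≤ ‖q - 1‖ * c ^ N := by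
    intro N
    rw [dist_eq_norm, hg]
    have hm : z.appr N ≡ f N [MOD p ^ N] := by
      refine nat_modEq_of_padic ?_
      have : ((z.appr N : ℤ_[p]) - f N)
          = ((z.appr N : ℤ_[p]) - z) - ((f N : ℤ_[p]) - z) := by ring
      rw [this]
      exact Ideal.sub_mem _ (appr_sub_mem z N) (hf N)
    calc ‖q ^ z.appr N - q ^ f N‖ ≤ c ^ N * ‖q - 1‖ :=
          unit_pow_modEq (le_of_lt hc) hq1 hpc hqc N hm
    _ = ‖q - 1‖ * c ^ N := mul_comm _ _
  refine squeeze_zero (fun N => dist_nonneg) hbd ?_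
  simpa using (tendsto_pow_atTop_nhds_zero_of_lt_one hc0 hc).const_mul ‖q - 1‖

lemma tendsto_appr_qpow (hc : c < 1) (hq1 : ‖q - 1‖ ≤ 1) (hpc : ‖(p : K)‖ ≤ c)
    (hqc : ‖q - 1‖ ^ (p - 1) ≤ c) (z : ℤ_[p]) :
    Tendsto (fun N => q ^ z.appr N) atTop (𝓝 (qpow q z)) :=
  qpow_tendsto_of hc hq1 hpc hqc z (fun N => appr_sub_mem z N)

lemma norm_qpow_sub_one_le (hc : c < 1) (hq1 : ‖q - 1‖ ≤ 1) (hpc : ‖(p : K)‖ ≤ c)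
    (hqc : ‖q - 1‖ ^ (p - 1) ≤ c) (z : ℤ_[p]) : ‖qpow q z - 1‖ ≤ ‖q - 1‖ := by
  have h := tendsto_appr_qpow hc hq1 hpc hqc z
  have : Tendsto (fun N => ‖q ^ z.appr N - 1‖) atTop (𝓝 ‖qpow q z - 1‖) :=
    ((h.sub_const 1).norm)
  exact le_of_tendsto this (Eventually.of_forall fun N => unit_pow_sub_one hq1 _)

lemma qpow_nat_mul (hc : c < 1) (hq1 : ‖q - 1‖ ≤ 1) (hpc : ‖(p : K)‖ ≤ c)
    (hqc : ‖q - 1‖ ^ (p - 1) ≤ c) (m : ℕ) (z : ℤ_[p]) :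
    qpow q ((m : ℤ_[p]) * z) = (qpow q z) ^ m := by
  refine tendsto_nhds_unique (qpow_tendsto_of hc hq1 hpc hqc ((m : ℤ_[p]) * z)
    (f := fun N => m * z.appr N) (fun N => ?_)) ?_
  · have : ((m * z.appr N : ℕ) : ℤ_[p]) - (m : ℤ_[p]) * z
        = (m : ℤ_[p]) * ((z.appr N : ℤ_[p]) - z) := by push_cast; ring
    rw [this]
    exact Ideal.mul_mem_left _ _ (appr_sub_mem z N)
  · have := (tendsto_appr_qpow hc hq1 hpc hqc z).pow m
    refine this.congr (fun N => ?_)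
    rw [← pow_mul, mul_comm]

lemma qpow_linear (hc : c < 1) (hq1 : ‖q - 1‖ ≤ 1) (hpc : ‖(p : K)‖ ≤ c)
    (hqc : ‖q - 1‖ ^ (p - 1) ≤ c) {r : ℕ} (l : ℕ) (aa : Fin r → ℤ_[p]) (x : Fin r → ℕ) :
    qpow q ((l : ℤ_[p]) * ∑ j, aa j * (x j : ℤ_[p]))
      = ∏ j, (qpow q ((l : ℤ_[p]) * aa j)) ^ (x j) := by
  refine tendsto_nhds_unique (qpow_tendsto_of hc hq1 hpc hqc _
    (f := fun N => ∑ j, ((l : ℤ_[p]) * aa j).appr N * x j) (fun N => ?_)) ?_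
  · have : ((∑ j, ((l : ℤ_[p]) * aa j).appr N * x j : ℕ) : ℤ_[p])
        - (l : ℤ_[p]) * ∑ j, aa j * (x j : ℤ_[p])
        = ∑ j, (((((l : ℤ_[p]) * aa j).appr N : ℤ_[p]) - (l : ℤ_[p]) * aa j) * (x j : ℤ_[p])) := by
      push_cast
      rw [Finset.mul_sum, ← Finset.sum_sub_distrib]
      exact Finset.sum_congr rfl (fun j _ => by ring)
    rw [this]
    exact Ideal.sum_mem _ (fun j _ => Ideal.mul_mem_right _ _ (appr_sub_mem _ N))
  · have h1 : Tendsto (fun N => ∏ j, (q ^ (((l : ℤ_[p]) * aa j).appr N)) ^ (x j)) atTop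
        (𝓝 (∏ j, (qpow q ((l : ℤ_[p]) * aa j)) ^ (x j))) :=
      tendsto_finset_prod _ (fun j _ => (tendsto_appr_qpow hc hq1 hpc hqc _).pow (x j))
    refine h1.congr (fun N => ?_)
    rw [← Finset.prod_pow_eq_pow_sum]
    exact Finset.prod_congr rfl (fun j _ => by rw [← pow_mul])

end Qpow
lemma pow_sub_one_expand {R : Type*} [CommRing R] (x : R) (n : ℕ) :
    x ^ n - 1 = ∑ i ∈ Finset.range n, (x - 1) ^ (i + 1) * (n.choose (i + 1) : R) := by
  have h1 : x ^ n = ((x - 1) + 1) ^ n := by ring_nf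
  rw [h1, add_pow]
  simp only [one_pow, mul_one]
  rw [Finset.sum_range_succ' (fun i => (x - 1) ^ i * (n.choose i : R))]
  simp

section Root
variable {p : ℕ} [Fact p.Prime] {K : Type*} [NormedField K] [IsUltrametricDist K]

lemma eq_one_of_pow_eq_one (hpK : ‖(p : K)‖ = (p : ℝ)⁻¹) {x : K}
    (hx : ‖x - 1‖ < (p : ℝ) ^ (-(1 : ℝ) / ((p : ℝ) - 1))) :
    ∀ m : ℕ, 1 ≤ m → x ^ m = 1 → x = 1 := by
  have hp := (Fact.out : p.Prime)
  have hp1 : (1 : ℝ) < p := by exact_mod_cast hp.one_lt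
  have hpsub : (0 : ℝ) < (p : ℝ) - 1 := by linarith
  have h2p : 2 ≤ p := (Fact.out : p.Prime).two_le
  have hr1 : (p : ℝ) ^ (-(1 : ℝ) / ((p : ℝ) - 1)) < 1 :=
    Real.rpow_lt_one_of_one_lt_of_neg hp1 (by
      apply div_neg_of_neg_of_pos <;> [norm_num; exact hpsub])
  have hx1 : ‖x - 1‖ < 1 := hx.trans hr1
  intro m
  induction m using Nat.strong_induction_on with
  | _ m IH =>
    intro hm hxm
    by_contra hxne
    have hxne' : x - 1 ≠ 0 := sub_ne_zero.mpr hxne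
    have hsum : ∑ i ∈ Finset.range m, x ^ i = 0 := by
      have h := geom_sum_mul x m
      rw [hxm, sub_self] at h
      rcases mul_eq_zero.mp h with h | h
      · exact h
      · exact absurd h hxne'
    have hmK : ‖(m : K)‖ ≤ ‖x - 1‖ := by
      have hmeq : (m : K) = ∑ i ∈ Finset.range m, ((1 : K) - x ^ i) := by
        rw [Finset.sum_sub_distrib, hsum, sub_zero, Finset.sum_const, Finset.card_range,
          nsmul_eq_mul, mul_one]
      rw [hmeq]
      refine IsUltrametricDist.norm_sum_le_of_forall_le_of_nonneg (norm_nonneg _)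
        (fun i _ => ?_)
      rw [norm_sub_rev]
      exact unit_pow_sub_one hx1.le i
    have hpm : p ∣ m := by
      by_contra hpm
      have hcop : Nat.Coprime p m := (Nat.Prime.coprime_iff_not_dvd hp).mpr hpm
      have hbez := Nat.gcd_eq_gcd_ab p m
      rw [hcop] at hbez
      have hK : (1 : K) = (p : K) * ((Nat.gcdA p m : ℤ) : K)
          + (m : K) * ((Nat.gcdB p m : ℤ) : K) := by
        have h2 := congrArg (fun z : ℤ => ((z : K))) hbez
        push_cast at h2
        simpa using h2
      have hle : (1 : ℝ) ≤ max (‖(p : K)‖) (‖(m : K)‖) := by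
        calc (1:ℝ) = ‖(1 : K)‖ := by simp
        _ ≤ max ‖(p : K) * ((Nat.gcdA p m : ℤ) : K)‖ ‖(m : K) * ((Nat.gcdB p m : ℤ) : K)‖ := by
            rw [hK]; exact IsUltrametricDist.norm_add_le_max _ _
        _ ≤ max (‖(p : K)‖) (‖(m : K)‖) := by
            apply max_le_max <;>
            · rw [norm_mul]
              exact mul_le_of_le_one_right (norm_nonneg _)
                (IsUltrametricDist.norm_intCast_le_one K _)
      have h1 : ‖(p : K)‖ < 1 := by rw [hpK]; exact inv_lt_one_of_one_lt₀ hp1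
      have h2 : ‖(m : K)‖ < 1 := lt_of_le_of_lt hmK hx1
      rcases max_cases (‖(p : K)‖) (‖(m : K)‖) with ⟨he, _⟩ | ⟨he, _⟩ <;> rw [he] at hle <;>
        linarith
    obtain ⟨m₂, hm₂⟩ := hpm
    have hm₂1 : 1 ≤ m₂ := by
      rcases Nat.eq_zero_or_pos m₂ with h0 | h
      · subst h0; simp at hm₂; omega
      · exact h
    set y := x ^ m₂ with hy
    have hyp : y ^ p = 1 := by rw [hy, ← pow_mul, mul_comm m₂ p, ← hm₂, hxm]
    have hys : ‖y - 1‖ ≤ ‖x - 1‖ := unit_pow_sub_one hx1.le m₂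
    by_cases hy1 : y = 1
    · have := hp.two_le
      have hlt : m₂ < m := by
        rw [hm₂]
        have h2 := hp.two_le
        nlinarith
      exact hxne (IH m₂ hlt hm₂1 hy1)
    · have hsne : y - 1 ≠ 0 := sub_ne_zero.mpr hy1
      have hexp := pow_sub_one_expand y p
      rw [hyp, sub_self] at hexp
      have hfac : (0 : K)
          = (y - 1) * ∑ i ∈ Finset.range p, (y - 1) ^ i * (p.choose (i + 1) : K) := by
        rw [hexp, Finset.mul_sum]
        exact Finset.sum_congr rfl (fun i _ => by ring)
      have hsum2 : ∑ i ∈ Finset.range p, (y - 1) ^ i * (p.choose (i + 1) : K) = 0 := by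
        rcases mul_eq_zero.mp hfac.symm with h | h
        · exact absurd h hsne
        · exact h
      have hp' : p = (p - 1) + 1 := by omega
      rw [hp'] at hsum2
      rw [Finset.sum_range_succ'
        (fun i => (y - 1) ^ i * (((p - 1 + 1).choose (i + 1) : ℕ) : K))] at hsum2
      simp only [pow_zero, one_mul, zero_add, Nat.choose_one_right] at hsum2
      rw [← hp'] at hsum2
      have hpeel : (p : K)
          = -∑ i ∈ Finset.range (p - 1), (y - 1) ^ (i + 1) * (p.choose (i + 1 + 1) : K) := by
        linear_combination hsum2
      have hy1' : ‖y - 1‖ < 1 := hys.trans_lt hx1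
      have hbound : ‖(p : K)‖ ≤ max (‖(p : K)‖ * ‖y - 1‖) (‖y - 1‖ ^ (p - 1)) := by
        conv_lhs => rw [hpeel]
        rw [norm_neg]
        refine IsUltrametricDist.norm_sum_le_of_forall_le_of_nonneg
          (le_max_of_le_right (by positivity)) (fun i hi => ?_)
        rw [Finset.mem_range] at hi
        rw [norm_mul, norm_pow]
        by_cases hip : i + 1 + 1 = p
        · refine le_max_of_le_right ?_
          have h1 : p.choose (i + 1 + 1) = 1 := by rw [hip, Nat.choose_self]
          rw [h1]
          simp only [Nat.cast_one, norm_one, mul_one]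
          have : i + 1 = p - 1 := by omega
          rw [this]
        · refine le_max_of_le_left ?_
          have hdvd : p ∣ p.choose (i + 1 + 1) := hp.dvd_choose_self (by omega) (by omega)
          obtain ⟨mm, hmm⟩ := hdvd
          have hC : ‖(p.choose (i + 1 + 1) : K)‖ ≤ ‖(p : K)‖ := by
            rw [hmm]
            push_cast
            rw [norm_mul]
            exact mul_le_of_le_one_right (norm_nonneg _)
              (IsUltrametricDist.norm_natCast_le_one K mm)
          calc ‖y - 1‖ ^ (i + 1) * ‖(p.choose (i + 1 + 1) : K)‖
              ≤ ‖y - 1‖ ^ 1 * ‖(p : K)‖ :=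
                mul_le_mul (pow_le_pow_of_le_one (norm_nonneg _) hy1'.le (by omega)) hC
                  (norm_nonneg _) (by positivity)
          _ = ‖(p : K)‖ * ‖y - 1‖ := by ring
      have hppos : (0 : ℝ) < ‖(p : K)‖ := by rw [hpK]; positivity
      have hps : ‖(p : K)‖ ≤ ‖y - 1‖ ^ (p - 1) := by
        rcases max_cases (‖(p : K)‖ * ‖y - 1‖) (‖y - 1‖ ^ (p - 1)) with ⟨he, _⟩ | ⟨he, _⟩ <;>
          rw [he] at hbound
        · nlinarith
        · exact hbound
      have h2 : ‖y - 1‖ ^ (p - 1) < ((p : ℝ) ^ (-(1 : ℝ) / ((p : ℝ) - 1))) ^ (p - 1) :=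
        pow_lt_pow_left₀ (hys.trans_lt hx) (norm_nonneg _) (by omega)
      have h3 : ((p : ℝ) ^ (-(1 : ℝ) / ((p : ℝ) - 1))) ^ (p - 1) = (p : ℝ)⁻¹ := by
        rw [← Real.rpow_natCast ((p : ℝ) ^ (-(1 : ℝ) / ((p : ℝ) - 1))) (p - 1),
          ← Real.rpow_mul (by positivity)]
        have hcast : ((p - 1 : ℕ) : ℝ) = (p : ℝ) - 1 := by
          push_cast [Nat.cast_sub hp.one_le]
          ring
        rw [hcast]
        have : (-(1 : ℝ) / ((p : ℝ) - 1)) * ((p : ℝ) - 1) = -1 := by field_simp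
        rw [this, Real.rpow_neg_one]
      rw [h3] at h2
      rw [hpK] at hps
      linarith

end Root
section Ulem
variable {K : Type*} [NormedField K] [IsUltrametricDist K]

lemma norm_sub_eq_left {a b : K} (h : ‖b‖ < ‖a‖) : ‖a - b‖ = ‖a‖ := by
  rw [sub_eq_add_neg, IsUltrametricDist.norm_add_eq_max_of_norm_ne_norm
    (by rw [norm_neg]; exact ne_of_gt h), norm_neg]
  exact max_eq_left h.le

variable {u : K} (hu : ∀ f : ℕ, 1 ≤ f → 1 ≤ ‖1 - u ^ f‖)

include hu in
lemma norm_upow_le {f : ℕ} (hf : 1 ≤ f) : ‖u ^ f‖ ≤ ‖1 - u ^ f‖ := by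
  calc ‖u ^ f‖ = ‖(u ^ f - 1) + 1‖ := by ring_nf
  _ ≤ max ‖u ^ f - 1‖ ‖(1 : K)‖ := IsUltrametricDist.norm_add_le_max _ _
  _ ≤ ‖1 - u ^ f‖ := by
      rw [norm_sub_rev (u ^ f) 1]
      exact max_le le_rfl (by simpa using hu f hf)

include hu in
lemma norm_one_sub_gu {g : K} (hg : ‖g - 1‖ < 1) {f : ℕ} (hf : 1 ≤ f) :
    ‖1 - g * u ^ f‖ = ‖1 - u ^ f‖ := by
  have hpos : (0:ℝ) < ‖1 - u ^ f‖ := lt_of_lt_of_le one_pos (hu f hf)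
  have h1 : 1 - g * u ^ f = (1 - u ^ f) - (g - 1) * u ^ f := by ring
  rw [h1, norm_sub_eq_left]
  calc ‖(g - 1) * u ^ f‖ = ‖g - 1‖ * ‖u ^ f‖ := norm_mul _ _
  _ ≤ ‖g - 1‖ * ‖1 - u ^ f‖ := by gcongr; exact norm_upow_le hu hf
  _ < 1 * ‖1 - u ^ f‖ := mul_lt_mul_of_pos_right hg hpos
  _ = ‖1 - u ^ f‖ := one_mul _

end Ulem

lemma sum_range_mul_split {M : Type*} [AddCommMonoid M] (f : ℕ → M) (a b : ℕ) :
    ∑ n ∈ Finset.range (a * b), f n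
      = ∑ y ∈ Finset.range a, ∑ i ∈ Finset.range b, f (y * b + i) := by
  induction a with
  | zero => simp
  | succ n ih =>
    rw [Nat.succ_mul, Finset.sum_range_add, ih, Finset.sum_range_succ]

lemma char_sum_eval {K : Type*} [NormedField K] {d : ℕ} (χ : DirichletCharacter K d)
    (b : K) (hbd : b ^ d ≠ 1) (P : ℕ) :
    ∑ n ∈ Finset.range (P * d), χ (n : ZMod d) * b ^ n
      = (∑ i ∈ Finset.range d, χ (i : ZMod d) * b ^ i) * ((1 - (b ^ d) ^ P) / (1 - b ^ d)) := by
  rw [sum_range_mul_split (fun n => χ (n : ZMod d) * b ^ n) P d]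
  have hinner : ∀ y : ℕ, ∑ i ∈ Finset.range d, χ ((y * d + i : ℕ) : ZMod d) * b ^ (y * d + i)
      = (b ^ d) ^ y * ∑ i ∈ Finset.range d, χ (i : ZMod d) * b ^ i := by
    intro y
    rw [Finset.mul_sum]
    refine Finset.sum_congr rfl (fun i _ => ?_)
    have hcast : ((y * d + i : ℕ) : ZMod d) = (i : ZMod d) := by
      push_cast
      simp [ZMod.natCast_self]
    rw [hcast, pow_add, pow_mul]
    ring
  simp only [hinner]
  rw [← Finset.sum_mul, geom_sum_eq hbd, mul_comm]
  congr 1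
  rw [← neg_div_neg_eq]
  ring_nf
section Expand
variable {p : ℕ} [Fact p.Prime] {K : Type*} [NormedField K] [IsUltrametricDist K]
  [CompleteSpace K] {q : K} {c : ℝ}

lemma qnum_pow_expand (hc : c < 1) (hq1 : ‖q - 1‖ ≤ 1) (hpc : ‖(p : K)‖ ≤ c)
    (hqc : ‖q - 1‖ ^ (p - 1) ≤ c) (k : ℕ) {r : ℕ} (aa : Fin r → ℤ_[p]) (x : Fin r → ℕ) :
    (qnum q (∑ j, aa j * (x j : ℤ_[p]))) ^ k
      = ((1 - q)⁻¹) ^ k * ∑ l ∈ Finset.range (k + 1),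
          (k.choose l : K) * (-1) ^ l * ∏ j, (qpow q ((l : ℤ_[p]) * aa j)) ^ (x j) := by
  rw [qnum, div_pow, div_eq_mul_inv, ← inv_pow, mul_comm ((1 - qpow q _) ^ k) _]
  congr 1
  have hW : ∀ l : ℕ, (qpow q (∑ j, aa j * (x j : ℤ_[p]))) ^ l
      = ∏ j, (qpow q ((l : ℤ_[p]) * aa j)) ^ (x j) := by
    intro l
    rw [← qpow_nat_mul hc hq1 hpc hqc l, qpow_linear hc hq1 hpc hqc l aa x]
  have hbin : (1 - qpow q (∑ j, aa j * (x j : ℤ_[p]))) ^ k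
      = ∑ l ∈ Finset.range (k + 1),
        (-(qpow q (∑ j, aa j * (x j : ℤ_[p])))) ^ l * (k.choose l : K) := by
    have h1 : (1 : K) - qpow q (∑ j, aa j * (x j : ℤ_[p]))
        = -(qpow q (∑ j, aa j * (x j : ℤ_[p]))) + 1 := by ring
    rw [h1, add_pow]
    simp
  rw [hbin]
  refine Finset.sum_congr rfl (fun l _ => ?_)
  rw [neg_pow, hW l]
  ring

end Expand
section Main
variable {p : ℕ} [Fact p.Prime] {K : Type*} [NormedField K] [IsUltrametricDist K]
  [CompleteSpace K] {q u : K} {c : ℝ}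

lemma bpow_ne_one (hu : ∀ f : ℕ, 1 ≤ f → 1 ≤ ‖1 - u ^ f‖) {g : K} (hg : ‖g - 1‖ < 1)
    {d : ℕ} (hd : 1 ≤ d) : (g * u) ^ d ≠ 1 := by
  intro h
  have hgd : ‖g ^ d - 1‖ < 1 := lt_of_le_of_lt (unit_pow_sub_one hg.le d) hg
  have heq := norm_one_sub_gu hu hgd hd
  rw [mul_pow] at h
  have hz : (1 : K) - g ^ d * u ^ d = 0 := by rw [h]; ring
  rw [hz, norm_zero] at heq
  have h1 : (1:ℝ) ≤ ‖1 - u ^ d‖ := hu d hd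
  rw [← heq] at h1
  linarith

lemma per_N_identity (hc : c < 1) (hq1 : ‖q - 1‖ < 1) (hpc : ‖(p : K)‖ ≤ c)
    (hqc : ‖q - 1‖ ^ (p - 1) ≤ c) (hu : ∀ f : ℕ, 1 ≤ f → 1 ≤ ‖1 - u ^ f‖)
    {r : ℕ} (a : Fin r → ℤ_[p]) {d : ℕ} (hd : 1 ≤ d) (χ : DirichletCharacter K d)
    (k N : ℕ) :
    ((1 - u) / (1 - u ^ (d * p ^ N))) ^ r *
        ∑ x ∈ Fintype.piFinset fun _ : Fin r => Finset.range (d * p ^ N),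
          (∏ j, χ ((x j : ZMod d))) * (qnum q (∑ j, a j * (x j : ℤ_[p]))) ^ k *
            u ^ (∑ j, x j)
      = ∑ l ∈ Finset.range (k + 1),
          (k.choose l : K) * (-1) ^ l * ((1 - q)⁻¹) ^ k *
            ∏ j, ((∑ i ∈ Finset.range d, χ (i : ZMod d) * (qpow q ((l : ℤ_[p]) * a j) * u) ^ i)
              * (1 - u) * (1 - (qpow q ((l : ℤ_[p]) * a j) * u) ^ d)⁻¹
              * ((1 - ((qpow q ((l : ℤ_[p]) * a j) * u) ^ d) ^ (p ^ N))
                  / (1 - u ^ (d * p ^ N)))) := by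
  have hβ : ∀ l : ℕ, ∀ j : Fin r, ‖qpow q ((l : ℤ_[p]) * a j) - 1‖ < 1 := fun l j =>
    (norm_qpow_sub_one_le hc hq1.le hpc hqc _).trans_lt hq1
  have hbd : ∀ l : ℕ, ∀ j : Fin r, (qpow q ((l : ℤ_[p]) * a j) * u) ^ d ≠ 1 := fun l j =>
    bpow_ne_one hu (hβ l j) hd
  have step1 : ∑ x ∈ Fintype.piFinset fun _ : Fin r => Finset.range (d * p ^ N),
        (∏ j, χ ((x j : ZMod d))) * (qnum q (∑ j, a j * (x j : ℤ_[p]))) ^ k *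
          u ^ (∑ j, x j)
      = ((1 - q)⁻¹) ^ k * ∑ l ∈ Finset.range (k + 1),
          (k.choose l : K) * (-1) ^ l *
            ∏ j, ∑ n ∈ Finset.range (d * p ^ N),
              χ (n : ZMod d) * (qpow q ((l : ℤ_[p]) * a j) * u) ^ n := by
    have hx_eq : ∀ x : Fin r → ℕ,
        (∏ j, χ ((x j : ZMod d))) * (qnum q (∑ j, a j * (x j : ℤ_[p]))) ^ k *
          u ^ (∑ j, x j)
        = ∑ l ∈ Finset.range (k + 1), ((1 - q)⁻¹) ^ k *
            ((k.choose l : K) * (-1) ^ l *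
              ∏ j, (χ ((x j : ZMod d)) * (qpow q ((l : ℤ_[p]) * a j) * u) ^ (x j))) := by
      intro x
      rw [qnum_pow_expand hc hq1.le hpc hqc k a x]
      refine Eq.symm ?_
      have hterm : ∀ l ∈ Finset.range (k + 1), ((1 - q)⁻¹) ^ k *
            ((k.choose l : K) * (-1) ^ l *
              ∏ j, (χ ((x j : ZMod d)) * (qpow q ((l : ℤ_[p]) * a j) * u) ^ (x j)))
          = (∏ j, χ ((x j : ZMod d))) *
              (((1 - q)⁻¹) ^ k * ((k.choose l : K) * (-1) ^ l *
                ∏ j, (qpow q ((l : ℤ_[p]) * a j)) ^ (x j))) * u ^ (∑ j, x j) := by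
        intro l _
        rw [← Finset.prod_pow_eq_pow_sum Finset.univ (fun j => x j) u]
        have hbb : ∀ j : Fin r, (qpow q ((l : ℤ_[p]) * a j) * u) ^ (x j)
            = (qpow q ((l : ℤ_[p]) * a j)) ^ (x j) * u ^ (x j) := fun j => mul_pow _ _ _
        simp only [hbb, Finset.prod_mul_distrib]
        ring
      rw [Finset.sum_congr rfl hterm, ← Finset.sum_mul, ← Finset.mul_sum, ← Finset.mul_sum]
    rw [Finset.sum_congr rfl (fun x _ => hx_eq x), Finset.sum_comm, Finset.mul_sum]
    refine Finset.sum_congr rfl (fun l _ => ?_)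
    rw [← Finset.mul_sum, ← Finset.mul_sum,
      Finset.sum_prod_piFinset (Finset.range (d * p ^ N))
        (fun j n => χ (n : ZMod d) * (qpow q ((l : ℤ_[p]) * a j) * u) ^ n)]
  rw [step1, Finset.mul_sum, Finset.mul_sum]
  refine Finset.sum_congr rfl (fun l _ => ?_)
  have hSj : ∀ j : Fin r, ∑ n ∈ Finset.range (d * p ^ N),
        χ (n : ZMod d) * (qpow q ((l : ℤ_[p]) * a j) * u) ^ n
      = (∑ i ∈ Finset.range d, χ (i : ZMod d) * (qpow q ((l : ℤ_[p]) * a j) * u) ^ i)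
        * ((1 - ((qpow q ((l : ℤ_[p]) * a j) * u) ^ d) ^ (p ^ N))
            / (1 - (qpow q ((l : ℤ_[p]) * a j) * u) ^ d)) := by
    intro j
    rw [show d * p ^ N = p ^ N * d from Nat.mul_comm d (p ^ N)]
    exact char_sum_eval χ _ (hbd l j) (p ^ N)
  simp only [hSj]
  calc ((1 - u) / (1 - u ^ (d * p ^ N))) ^ r *
        (((1 - q)⁻¹) ^ k * ((k.choose l : K) * (-1) ^ l *
          ∏ j, ((∑ i ∈ Finset.range d, χ (i : ZMod d) * (qpow q ((l : ℤ_[p]) * a j) * u) ^ i)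
            * ((1 - ((qpow q ((l : ℤ_[p]) * a j) * u) ^ d) ^ (p ^ N))
                / (1 - (qpow q ((l : ℤ_[p]) * a j) * u) ^ d)))))
      = (k.choose l : K) * (-1) ^ l * ((1 - q)⁻¹) ^ k *
          ((∏ _j : Fin r, ((1 - u) / (1 - u ^ (d * p ^ N)))) *
            ∏ j, ((∑ i ∈ Finset.range d, χ (i : ZMod d) * (qpow q ((l : ℤ_[p]) * a j) * u) ^ i)
              * ((1 - ((qpow q ((l : ℤ_[p]) * a j) * u) ^ d) ^ (p ^ N))
                  / (1 - (qpow q ((l : ℤ_[p]) * a j) * u) ^ d)))) := by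
        rw [Finset.prod_const, Finset.card_univ, Fintype.card_fin]
        ring
    _ = (k.choose l : K) * (-1) ^ l * ((1 - q)⁻¹) ^ k *
          ∏ j, (((1 - u) / (1 - u ^ (d * p ^ N))) *
            ((∑ i ∈ Finset.range d, χ (i : ZMod d) * (qpow q ((l : ℤ_[p]) * a j) * u) ^ i)
              * ((1 - ((qpow q ((l : ℤ_[p]) * a j) * u) ^ d) ^ (p ^ N))
                  / (1 - (qpow q ((l : ℤ_[p]) * a j) * u) ^ d)))) := by
        rw [← Finset.prod_mul_distrib]
    _ = (k.choose l : K) * (-1) ^ l * ((1 - q)⁻¹) ^ k *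
          ∏ j, ((∑ i ∈ Finset.range d, χ (i : ZMod d) * (qpow q ((l : ℤ_[p]) * a j) * u) ^ i)
            * (1 - u) * (1 - (qpow q ((l : ℤ_[p]) * a j) * u) ^ d)⁻¹
            * ((1 - ((qpow q ((l : ℤ_[p]) * a j) * u) ^ d) ^ (p ^ N))
                / (1 - u ^ (d * p ^ N)))) := by
        congr 1
        refine Finset.prod_congr rfl (fun j _ => ?_)
        simp only [div_eq_mul_inv]
        ring

end Main
section Lim
variable {p : ℕ} [Fact p.Prime] {K : Type*} [NormedField K] [IsUltrametricDist K]
  [CompleteSpace K] {q u : K} {c : ℝ}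

lemma one_sub_upow_ne (hu : ∀ f : ℕ, 1 ≤ f → 1 ≤ ‖1 - u ^ f‖) {f : ℕ} (hf : 1 ≤ f) :
    (1 : K) - u ^ f ≠ 0 := by
  intro h
  have := hu f hf
  rw [h, norm_zero] at this
  linarith

lemma G_tendsto (hc : c < 1) (hq1 : ‖q - 1‖ < 1) (hpc : ‖(p : K)‖ ≤ c)
    (hqc : ‖q - 1‖ ^ (p - 1) ≤ c) (hu : ∀ f : ℕ, 1 ≤ f → 1 ≤ ‖1 - u ^ f‖)
    {d : ℕ} (hd : 1 ≤ d) {β : K} (hβle : ‖β - 1‖ ≤ ‖q - 1‖) :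
    Filter.Tendsto (fun N : ℕ => (1 - ((β * u) ^ d) ^ (p ^ N)) / (1 - u ^ (d * p ^ N)))
      Filter.atTop (nhds 1) := by
  have hp := (Fact.out : p.Prime)
  have hc0 : (0:ℝ) ≤ c := le_trans (norm_nonneg _) hpc
  have hβ1 : ‖β - 1‖ ≤ 1 := hβle.trans hq1.le
  have hβc : ‖β - 1‖ ^ (p - 1) ≤ c :=
    le_trans (pow_le_pow_left₀ (norm_nonneg _) hβle (p - 1)) hqc
  rw [tendsto_iff_norm_sub_tendsto_zero]
  have hbound : ∀ N : ℕ,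
      ‖(1 - ((β * u) ^ d) ^ (p ^ N)) / (1 - u ^ (d * p ^ N)) - 1‖ ≤ c ^ N * ‖q - 1‖ := by
    intro N
    have hM : 1 ≤ d * p ^ N := Nat.one_le_iff_ne_zero.mpr
      (Nat.mul_ne_zero (by omega) (pow_ne_zero _ hp.pos.ne'))
    have hne : (1 : K) - u ^ (d * p ^ N) ≠ 0 := one_sub_upow_ne hu hM
    have hpow : ((β * u) ^ d) ^ (p ^ N) = β ^ (d * p ^ N) * u ^ (d * p ^ N) := by
      rw [mul_pow, mul_pow, ← pow_mul, ← pow_mul]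
    have heq : (1 - ((β * u) ^ d) ^ (p ^ N)) / (1 - u ^ (d * p ^ N)) - 1
        = (1 - β ^ (d * p ^ N)) * u ^ (d * p ^ N) / (1 - u ^ (d * p ^ N)) := by
      rw [hpow, div_sub_one hne]
      congr 1
      ring
    rw [heq, norm_div, norm_mul]
    have hγ : ‖1 - β ^ (d * p ^ N)‖ ≤ c ^ N * ‖q - 1‖ := by
      rw [norm_sub_rev]
      have h1 : β ^ (d * p ^ N) = (β ^ p ^ N) ^ d := by
        rw [← pow_mul, Nat.mul_comm d (p ^ N)]
      have h2 : ‖β ^ p ^ N - 1‖ ≤ c ^ N * ‖β - 1‖ := unit_pow_p_pow hc.le hβ1 hpc hβc N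
      have h3 : ‖β ^ p ^ N - 1‖ ≤ 1 := by
        refine h2.trans ?_
        calc c ^ N * ‖β - 1‖ ≤ 1 * 1 :=
              mul_le_mul (pow_le_one₀ hc0 hc.le) hβ1 (norm_nonneg _) zero_le_one
        _ = 1 := one_mul _
      rw [h1]
      calc ‖(β ^ p ^ N) ^ d - 1‖ ≤ ‖β ^ p ^ N - 1‖ := unit_pow_sub_one h3 d
      _ ≤ c ^ N * ‖β - 1‖ := h2
      _ ≤ c ^ N * ‖q - 1‖ := by gcongr
    have hfrac : ‖u ^ (d * p ^ N)‖ / ‖1 - u ^ (d * p ^ N)‖ ≤ 1 :=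
      div_le_one_of_le₀ (norm_upow_le hu hM) (norm_nonneg _)
    calc ‖1 - β ^ (d * p ^ N)‖ * ‖u ^ (d * p ^ N)‖ / ‖1 - u ^ (d * p ^ N)‖
        = ‖1 - β ^ (d * p ^ N)‖ * (‖u ^ (d * p ^ N)‖ / ‖1 - u ^ (d * p ^ N)‖) := by
          rw [mul_div_assoc]
    _ ≤ (c ^ N * ‖q - 1‖) * 1 :=
          mul_le_mul hγ hfrac (by positivity) (by positivity)
    _ = c ^ N * ‖q - 1‖ := mul_one _
  refine squeeze_zero (fun N => norm_nonneg _) hbound ?_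
  simpa using ((tendsto_pow_atTop_nhds_zero_of_lt_one hc0 hc).mul_const ‖q - 1‖)

end Lim

/-- **character distribution relation, Theorem 6.** For `k ≥ 0`, the limit
`H_{k,χ}^{(r)}(u,q|a⃗) = lim_N ((1-u)/(1-u^{d p^N}))^r ∑_{x_1,…,x_r=0}^{d p^N-1}
  (∏_j χ(x_j)) [∑_j a_j x_j : q]^k u^{∑_j x_j}` exists, and
`(1-u)^{-r} H_{k,χ}^{(r)}(u,q|a⃗)
  = (1-u^d)^{-r} [d:q]^k ∑_{i_1,…,i_r=0}^{d-1} u^{∑ i_j} (∏_j χ(i_j)) H̃_k(i⃗)`,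
where `H̃_k(i⃗) = (1-u^d)^r (1-q^d)^{-k} ∑_{l=0}^k C(k,l)(-1)^l q^{l ∑_j a_j i_j}
  ∏_j (1 - q^{d l a_j} u^d)⁻¹`. -/
theorem qEulerBarnes_character_distribution
    {p : ℕ} [Fact p.Prime] {K : Type*} [NormedField K] [CompleteSpace K]
    [IsUltrametricDist K] (hpK : ‖(p : K)‖ = (p : ℝ)⁻¹)
    (r : ℕ) (hr : 1 ≤ r) (a : Fin r → ℤ_[p]) (ha : ∀ j, a j ≠ 0)
    (u q : K) (hu : ∀ f : ℕ, 1 ≤ f → 1 ≤ ‖1 - u ^ f‖)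
    (hq0 : 0 < ‖1 - q‖) (hq1 : ‖1 - q‖ < (p : ℝ) ^ (-(1 : ℝ) / ((p : ℝ) - 1)))
    (d : ℕ) (hd : 1 ≤ d) (χ : DirichletCharacter K d) (k : ℕ) :
    ∃ L : K,
      Tendsto
        (fun N : ℕ =>
          ((1 - u) / (1 - u ^ (d * p ^ N))) ^ r *
            ∑ x ∈ Fintype.piFinset fun _ : Fin r => Finset.range (d * p ^ N),
              (∏ j, χ ((x j : ZMod d))) * (qnum q (∑ j, a j * (x j : ℤ_[p]))) ^ k *
                u ^ (∑ j, x j))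
        atTop (nhds L) ∧
      ((1 - u)⁻¹) ^ r * L =
        ((1 - u ^ d)⁻¹) ^ r * ((1 - q ^ d) / (1 - q)) ^ k *
          ∑ i ∈ Fintype.piFinset fun _ : Fin r => Finset.range d,
            u ^ (∑ j, i j) * (∏ j, χ ((i j : ZMod d))) *
              ((1 - u ^ d) ^ r * ((1 - q ^ d)⁻¹) ^ k *
                ∑ l ∈ Finset.range (k + 1),
                  (k.choose l : K) * (-1) ^ l *
                    qpow q ((l : ℤ_[p]) * ∑ j, a j * (i j : ℤ_[p])) *
                      ∏ j, (1 - qpow q (((d * l : ℕ) : ℤ_[p]) * a j) * u ^ d)⁻¹) := by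
  have hp := (Fact.out : p.Prime)
  have hp1 : (1 : ℝ) < p := by exact_mod_cast hp.one_lt
  have hpsub : (0 : ℝ) < (p : ℝ) - 1 := by linarith
  have hr1 : (p : ℝ) ^ (-(1 : ℝ) / ((p : ℝ) - 1)) < 1 :=
    Real.rpow_lt_one_of_one_lt_of_neg hp1 (div_neg_of_neg_of_pos (by norm_num) hpsub)
  have hqrev : ‖q - 1‖ = ‖1 - q‖ := norm_sub_rev q 1
  have ht1 : ‖q - 1‖ < 1 := by rw [hqrev]; exact hq1.trans hr1
  set c : ℝ := max ‖(p : K)‖ (‖q - 1‖ ^ (p - 1)) with hcdef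
  have hpc : ‖(p : K)‖ ≤ c := le_max_left _ _
  have hqc : ‖q - 1‖ ^ (p - 1) ≤ c := le_max_right _ _
  have hplt : ‖(p : K)‖ < 1 := by rw [hpK]; exact inv_lt_one_of_one_lt₀ hp1
  have hc1 : c < 1 :=
    max_lt hplt (pow_lt_one₀ (norm_nonneg _) ht1 (by have := hp.two_le; omega))
  have h1u : (1 : K) - u ≠ 0 := by
    have := one_sub_upow_ne hu (f := 1) le_rfl
    rwa [pow_one] at this
  have h1ud : (1 : K) - u ^ d ≠ 0 := one_sub_upow_ne hu hd
  have hqne1 : q ≠ 1 := by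
    intro h
    rw [h] at hq0
    simp at hq0
  have hQ : q ^ d ≠ 1 := fun h =>
    hqne1 (eq_one_of_pow_eq_one hpK (by rw [hqrev]; exact hq1) d hd h)
  have h1Q : (1 : K) - q ^ d ≠ 0 := sub_ne_zero.mpr (Ne.symm hQ)
  have h1q : (1 : K) - q ≠ 0 := sub_ne_zero.mpr (Ne.symm hqne1)
  have hβle : ∀ l : ℕ, ∀ j : Fin r, ‖qpow q ((l : ℤ_[p]) * a j) - 1‖ ≤ ‖q - 1‖ :=
    fun l j => norm_qpow_sub_one_le hc1 ht1.le hpc hqc _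
  have hbd : ∀ l : ℕ, ∀ j : Fin r, (qpow q ((l : ℤ_[p]) * a j) * u) ^ d ≠ 1 := fun l j =>
    bpow_ne_one hu ((hβle l j).trans_lt ht1) hd
  have hbne : ∀ l : ℕ, ∀ j : Fin r, (1 : K) - (qpow q ((l : ℤ_[p]) * a j) * u) ^ d ≠ 0 :=
    fun l j => sub_ne_zero.mpr (Ne.symm (hbd l j))
  refine ⟨∑ l ∈ Finset.range (k + 1),
      (k.choose l : K) * (-1) ^ l * ((1 - q)⁻¹) ^ k *
        ∏ j, ((∑ i ∈ Finset.range d, χ (i : ZMod d) * (qpow q ((l : ℤ_[p]) * a j) * u) ^ i)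
          * (1 - u) * (1 - (qpow q ((l : ℤ_[p]) * a j) * u) ^ d)⁻¹), ?_, ?_⟩
  · refine Filter.Tendsto.congr
      (fun N => (per_N_identity hc1 ht1 hpc hqc hu a hd χ k N).symm) ?_
    refine tendsto_finset_sum _ (fun l _ => ?_)
    have hprod : Filter.Tendsto
        (fun N : ℕ => ∏ j,
          (((∑ i ∈ Finset.range d, χ (i : ZMod d) * (qpow q ((l : ℤ_[p]) * a j) * u) ^ i)
            * (1 - u) * (1 - (qpow q ((l : ℤ_[p]) * a j) * u) ^ d)⁻¹)
            * ((1 - ((qpow q ((l : ℤ_[p]) * a j) * u) ^ d) ^ (p ^ N))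
                / (1 - u ^ (d * p ^ N)))))
        Filter.atTop
        (nhds (∏ j,
          (((∑ i ∈ Finset.range d, χ (i : ZMod d) * (qpow q ((l : ℤ_[p]) * a j) * u) ^ i)
            * (1 - u) * (1 - (qpow q ((l : ℤ_[p]) * a j) * u) ^ d)⁻¹) * 1))) :=
      tendsto_finset_prod _ (fun j _ =>
        (G_tendsto hc1 ht1 hpc hqc hu hd (hβle l j)).const_mul _)
    have hfin := hprod.const_mul ((k.choose l : K) * (-1) ^ l * ((1 - q)⁻¹) ^ k)
    simpa using hfin
  · -- identity part
    have hqd : ∀ (l : ℕ) (j : Fin r), qpow q (((d * l : ℕ) : ℤ_[p]) * a j)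
        = (qpow q ((l : ℤ_[p]) * a j)) ^ d := by
      intro l j
      have h1 : (((d * l : ℕ) : ℤ_[p]) * a j) = (d : ℤ_[p]) * ((l : ℤ_[p]) * a j) := by
        push_cast; ring
      rw [h1, qpow_nat_mul hc1 ht1.le hpc hqc d _]
    have hql : ∀ (l : ℕ) (i : Fin r → ℕ), qpow q ((l : ℤ_[p]) * ∑ j, a j * (i j : ℤ_[p]))
        = ∏ j, (qpow q ((l : ℤ_[p]) * a j)) ^ (i j) :=
      fun l i => qpow_linear hc1 ht1.le hpc hqc l a i
    have hinv : ∀ (l : ℕ) (j : Fin r),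
        (1 - (qpow q ((l : ℤ_[p]) * a j)) ^ d * u ^ d)⁻¹
          = (1 - (qpow q ((l : ℤ_[p]) * a j) * u) ^ d)⁻¹ := fun l j => by rw [mul_pow]
    have e1 : ((1 - u ^ d)⁻¹) ^ r * (1 - u ^ d) ^ r = 1 := by
      rw [← mul_pow, inv_mul_cancel₀ h1ud, one_pow]
    have e2 : ((1 - q ^ d) / (1 - q)) ^ k * ((1 - q ^ d)⁻¹) ^ k = ((1 - q)⁻¹) ^ k := by
      rw [← mul_pow]
      congr 1
      field_simp
    -- rewrite the RHS qpow terms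
    simp only [hqd, hql, hinv]
    -- common form
    have hcommon : ((1 - u)⁻¹) ^ r * (∑ l ∈ Finset.range (k + 1),
        (k.choose l : K) * (-1) ^ l * ((1 - q)⁻¹) ^ k *
          ∏ j, ((∑ i ∈ Finset.range d, χ (i : ZMod d) * (qpow q ((l : ℤ_[p]) * a j) * u) ^ i)
            * (1 - u) * (1 - (qpow q ((l : ℤ_[p]) * a j) * u) ^ d)⁻¹))
        = ∑ l ∈ Finset.range (k + 1),
          (k.choose l : K) * (-1) ^ l * ((1 - q)⁻¹) ^ k *
            ∏ j, ((∑ i ∈ Finset.range d, χ (i : ZMod d) * (qpow q ((l : ℤ_[p]) * a j) * u) ^ i)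
              * (1 - (qpow q ((l : ℤ_[p]) * a j) * u) ^ d)⁻¹) := by
      rw [Finset.mul_sum]
      refine Finset.sum_congr rfl (fun l _ => ?_)
      have hsplit : ∏ j, ((∑ i ∈ Finset.range d,
            χ (i : ZMod d) * (qpow q ((l : ℤ_[p]) * a j) * u) ^ i)
            * (1 - u) * (1 - (qpow q ((l : ℤ_[p]) * a j) * u) ^ d)⁻¹)
          = (1 - u) ^ r * ∏ j, ((∑ i ∈ Finset.range d,
              χ (i : ZMod d) * (qpow q ((l : ℤ_[p]) * a j) * u) ^ i)
              * (1 - (qpow q ((l : ℤ_[p]) * a j) * u) ^ d)⁻¹) := by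
        calc ∏ j, ((∑ i ∈ Finset.range d,
              χ (i : ZMod d) * (qpow q ((l : ℤ_[p]) * a j) * u) ^ i)
              * (1 - u) * (1 - (qpow q ((l : ℤ_[p]) * a j) * u) ^ d)⁻¹)
            = ∏ j, ((1 - u) * ((∑ i ∈ Finset.range d,
                χ (i : ZMod d) * (qpow q ((l : ℤ_[p]) * a j) * u) ^ i)
                * (1 - (qpow q ((l : ℤ_[p]) * a j) * u) ^ d)⁻¹)) :=
              Finset.prod_congr rfl (fun j _ => by ring)
          _ = (∏ _j : Fin r, (1 - u)) * ∏ j, ((∑ i ∈ Finset.range d,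
                χ (i : ZMod d) * (qpow q ((l : ℤ_[p]) * a j) * u) ^ i)
                * (1 - (qpow q ((l : ℤ_[p]) * a j) * u) ^ d)⁻¹) :=
              Finset.prod_mul_distrib
          _ = (1 - u) ^ r * ∏ j, ((∑ i ∈ Finset.range d,
                χ (i : ZMod d) * (qpow q ((l : ℤ_[p]) * a j) * u) ^ i)
                * (1 - (qpow q ((l : ℤ_[p]) * a j) * u) ^ d)⁻¹) := by
              rw [Finset.prod_const, Finset.card_univ, Fintype.card_fin]
      rw [hsplit]
      have e0 : ((1 - u)⁻¹) ^ r * (1 - u) ^ r = 1 := by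
        rw [← mul_pow, inv_mul_cancel₀ h1u, one_pow]
      calc ((1 - u)⁻¹) ^ r * ((k.choose l : K) * (-1) ^ l * ((1 - q)⁻¹) ^ k *
            ((1 - u) ^ r * ∏ j, ((∑ i ∈ Finset.range d,
              χ (i : ZMod d) * (qpow q ((l : ℤ_[p]) * a j) * u) ^ i)
              * (1 - (qpow q ((l : ℤ_[p]) * a j) * u) ^ d)⁻¹)))
          = (((1 - u)⁻¹) ^ r * (1 - u) ^ r) * ((k.choose l : K) * (-1) ^ l * ((1 - q)⁻¹) ^ k *
              ∏ j, ((∑ i ∈ Finset.range d,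
                χ (i : ZMod d) * (qpow q ((l : ℤ_[p]) * a j) * u) ^ i)
                * (1 - (qpow q ((l : ℤ_[p]) * a j) * u) ^ d)⁻¹)) := by ring
        _ = _ := by rw [e0, one_mul]
    rw [hcommon]
    -- now transform the RHS to the common form
    symm
    have hterm2 : ∀ x : Fin r → ℕ,
        u ^ (∑ j, x j) * (∏ j, χ ((x j : ZMod d))) *
          ((1 - u ^ d) ^ r * ((1 - q ^ d)⁻¹) ^ k *
            ∑ l ∈ Finset.range (k + 1),
              (k.choose l : K) * (-1) ^ l * (∏ j, (qpow q ((l : ℤ_[p]) * a j)) ^ (x j)) *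
                ∏ j, (1 - (qpow q ((l : ℤ_[p]) * a j) * u) ^ d)⁻¹)
        = ∑ l ∈ Finset.range (k + 1),
            ((1 - u ^ d) ^ r * ((1 - q ^ d)⁻¹) ^ k * ((k.choose l : K) * (-1) ^ l) *
              (∏ j, (1 - (qpow q ((l : ℤ_[p]) * a j) * u) ^ d)⁻¹)) *
              ∏ j, (χ ((x j : ZMod d)) * (qpow q ((l : ℤ_[p]) * a j) * u) ^ (x j)) := by
      intro x
      refine Eq.symm ?_
      have hterm : ∀ l ∈ Finset.range (k + 1),
          ((1 - u ^ d) ^ r * ((1 - q ^ d)⁻¹) ^ k * ((k.choose l : K) * (-1) ^ l) *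
              (∏ j, (1 - (qpow q ((l : ℤ_[p]) * a j) * u) ^ d)⁻¹)) *
              ∏ j, (χ ((x j : ZMod d)) * (qpow q ((l : ℤ_[p]) * a j) * u) ^ (x j))
          = u ^ (∑ j, x j) * (∏ j, χ ((x j : ZMod d))) *
              ((1 - u ^ d) ^ r * ((1 - q ^ d)⁻¹) ^ k *
                ((k.choose l : K) * (-1) ^ l * (∏ j, (qpow q ((l : ℤ_[p]) * a j)) ^ (x j)) *
                  ∏ j, (1 - (qpow q ((l : ℤ_[p]) * a j) * u) ^ d)⁻¹)) := by
        intro l _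
        rw [← Finset.prod_pow_eq_pow_sum Finset.univ (fun j => x j) u]
        have hbb : ∀ j : Fin r, (qpow q ((l : ℤ_[p]) * a j) * u) ^ (x j)
            = (qpow q ((l : ℤ_[p]) * a j)) ^ (x j) * u ^ (x j) := fun j => mul_pow _ _ _
        simp only [hbb, Finset.prod_mul_distrib]
        ring
      rw [Finset.sum_congr rfl hterm, ← Finset.mul_sum, ← Finset.mul_sum]
    rw [Finset.sum_congr rfl (fun x _ => hterm2 x), Finset.sum_comm, Finset.mul_sum]
    refine Finset.sum_congr rfl (fun l _ => ?_)
    rw [← Finset.mul_sum,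
      Finset.sum_prod_piFinset (Finset.range d)
        (fun j n => χ (n : ZMod d) * (qpow q ((l : ℤ_[p]) * a j) * u) ^ n)]
    calc ((1 - u ^ d)⁻¹) ^ r * ((1 - q ^ d) / (1 - q)) ^ k *
          (((1 - u ^ d) ^ r * ((1 - q ^ d)⁻¹) ^ k * ((k.choose l : K) * (-1) ^ l) *
            (∏ j, (1 - (qpow q ((l : ℤ_[p]) * a j) * u) ^ d)⁻¹)) *
            ∏ j, ∑ i ∈ Finset.range d, χ (i : ZMod d) * (qpow q ((l : ℤ_[p]) * a j) * u) ^ i)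
        = (((1 - u ^ d)⁻¹) ^ r * (1 - u ^ d) ^ r) *
            ((((1 - q ^ d) / (1 - q)) ^ k * ((1 - q ^ d)⁻¹) ^ k) *
              (((k.choose l : K) * (-1) ^ l) *
                ((∏ j, ∑ i ∈ Finset.range d, χ (i : ZMod d)
                    * (qpow q ((l : ℤ_[p]) * a j) * u) ^ i) *
                  ∏ j, (1 - (qpow q ((l : ℤ_[p]) * a j) * u) ^ d)⁻¹))) := by ring
      _ = (k.choose l : K) * (-1) ^ l * ((1 - q)⁻¹) ^ k *
            ∏ j, ((∑ i ∈ Finset.range d, χ (i : ZMod d) * (qpow q ((l : ℤ_[p]) * a j) * u) ^ i)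
              * (1 - (qpow q ((l : ℤ_[p]) * a j) * u) ^ d)⁻¹) := by
          rw [e1, e2, one_mul, ← Finset.prod_mul_distrib]
          ring
end

section
/- (Removing the p-part of the integral.) For every integer k ≥ 0, the limit lim_{N→∞} ((1−u)/(1−u^{d·p^N})) · Σ_{0 ≤ x < dp^N, p∤x} χ(x)·[a_1 x : q]^k · u^x exists in ℂ_p and equals I_χ(k; u, q) − χ(p)·[p:q]^k·((1−u)/(1−u^p))·I_χ(k; u^p, q^p), where I_χ(k; u, q) := lim_{N→∞} ((1−u)/(1−u^{dp^N})) Σ_{x=0}^{dp^N−1} χ(x)[a_1x:q]^k u^x, and I_χ(k; u^p, q^p) is the same limit formed with u replaced by u^p and q by q^p (both limits exist; note |1−(u^p)^f|_p ≥ 1 for all f ≥ 1 and 0 < |1−q^p|_p < p^{−1/(p−1)}, so this is defined). -/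
open Filter Finset

section
variable {p : ℕ} [hp : Fact p.Prime] {K : Type*} [NormedField K] [IsUltrametricDist K]

lemma rho_lt_one : (p : ℝ) ^ (-(1:ℝ) / ((p:ℝ) - 1)) < 1 := by
  have h1 : (1:ℝ) < p := by exact_mod_cast hp.out.one_lt
  exact Real.rpow_lt_one_of_one_lt_of_neg h1 (div_neg_of_neg_of_pos (by norm_num) (by linarith))

lemma norm_q_eq_one {q : K} (hlt : ‖1 - q‖ < 1) : ‖q‖ = 1 := by
  have h : q = 1 + -(1 - q) := by ring
  rw [h, IsUltrametricDist.norm_add_eq_max_of_norm_ne_norm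
    (by rw [norm_one, norm_neg]; exact hlt.ne'), norm_one, norm_neg]
  exact max_eq_left hlt.le

lemma norm_pow_sub_one {q : K} (hlt : ‖1 - q‖ < 1) (n : ℕ) : ‖q ^ n - 1‖ ≤ ‖1 - q‖ := by
  rw [← geom_sum_mul, norm_mul, norm_sub_rev]
  have h1 : ‖∑ i ∈ Finset.range n, q ^ i‖ ≤ 1 :=
    IsUltrametricDist.norm_sum_le_of_forall_le_of_nonneg zero_le_one
      (fun i _ => by rw [norm_pow, norm_q_eq_one hlt, one_pow])
  nlinarith [norm_nonneg (1 - q), norm_nonneg (∑ i ∈ Finset.range n, q ^ i)]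
end
section
variable {p : ℕ} [hp : Fact p.Prime] {K : Type*} [NormedField K] [IsUltrametricDist K]

lemma norm_one_sub_pow_prime (hpK : ‖(p : K)‖ = (p:ℝ)⁻¹) {q : K} (hq0 : 0 < ‖1 - q‖)
    (hq1 : ‖1 - q‖ < (p : ℝ) ^ (-(1:ℝ) / ((p:ℝ) - 1))) :
    ‖1 - q ^ p‖ = (p:ℝ)⁻¹ * ‖1 - q‖ := by
  have hp2 : 2 ≤ p := hp.out.two_le
  have hp1R : (1:ℝ) < p := by exact_mod_cast hp.out.one_lt
  have hppos : (0:ℝ) < (p:ℝ)⁻¹ := by positivity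
  set t : K := q - 1 with htdef
  have ht : ‖t‖ = ‖1 - q‖ := norm_sub_rev q 1
  have ht0 : 0 < ‖t‖ := by rw [ht]; exact hq0
  have hlt : ‖t‖ < 1 := by
    rw [ht]
    calc ‖1 - q‖ < _ := hq1
    _ < 1 := rho_lt_one
  -- ‖t‖ ^ (p - 1) < p⁻¹
  have htp : ‖t‖ ^ (p - 1) < (p:ℝ)⁻¹ := by
    have h1 : ‖t‖ ^ (p-1) < ((p : ℝ) ^ (-(1:ℝ) / ((p:ℝ) - 1))) ^ (p-1) := by
      apply pow_lt_pow_left₀ (ht ▸ hq1) (norm_nonneg _)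
      omega
    have h2 : ((p : ℝ) ^ (-(1:ℝ) / ((p:ℝ) - 1))) ^ (p-1) = (p:ℝ)⁻¹ := by
      rw [← Real.rpow_natCast ((p : ℝ) ^ (-(1:ℝ) / ((p:ℝ) - 1))) (p-1),
        ← Real.rpow_mul (by positivity)]
      have hc : ((p - 1 : ℕ) : ℝ) = (p:ℝ) - 1 := by
        push_cast [Nat.cast_sub (by omega : 1 ≤ p)]; ring
      rw [hc, div_mul_cancel₀, Real.rpow_neg_one]
      linarith
    linarith
  have hqp : q ^ p = ∑ i ∈ Finset.range (p+1), t ^ i * (p.choose i : K) := by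
    conv_lhs => rw [show q = t + 1 from by ring]
    rw [add_pow]
    simp
  have hsplit : ∑ i ∈ Finset.range (p+1), t ^ i * (p.choose i : K)
      = 1 + (t * p + ∑ i ∈ Finset.Ico 2 (p+1), t ^ i * (p.choose i : K)) := by
    rw [Finset.range_eq_Ico, Finset.sum_eq_sum_Ico_succ_bot (by omega),
      Finset.sum_eq_sum_Ico_succ_bot (by omega)]
    simp
  have hkey : 1 - q ^ p = -(t * p + ∑ i ∈ Finset.Ico 2 (p+1), t ^ i * (p.choose i : K)) := by
    rw [hqp, hsplit]; ring
  set S : K := ∑ i ∈ Finset.Ico 2 (p+1), t ^ i * (p.choose i : K) with hSdef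
  have hnormtp : ‖t * (p:K)‖ = ‖t‖ * (p:ℝ)⁻¹ := by rw [norm_mul, hpK]
  have hS : ‖S‖ ≤ max ((p:ℝ)⁻¹ * ‖t‖^2) (‖t‖^p) := by
    apply IsUltrametricDist.norm_sum_le_of_forall_le_of_nonneg
      (le_max_of_le_left (by positivity))
    intro i hi
    rw [Finset.mem_Ico] at hi
    rcases eq_or_lt_of_le (by omega : i ≤ p) with h | h
    · subst h
      rw [Nat.choose_self]
      push_cast
      rw [mul_one, norm_pow]
      exact le_max_right _ _
    · obtain ⟨c, hc⟩ := hp.out.dvd_choose_self (by omega) h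
      rw [norm_mul, norm_pow, hc]
      push_cast
      rw [norm_mul, hpK]
      refine le_max_of_le_left ?_
      have h1 : ‖t‖ ^ i ≤ ‖t‖ ^ 2 := pow_le_pow_of_le_one (norm_nonneg _) hlt.le hi.1
      have h2 : ‖(c : K)‖ ≤ 1 := IsUltrametricDist.norm_natCast_le_one K c
      calc ‖t‖ ^ i * ((p:ℝ)⁻¹ * ‖(c : K)‖) ≤ ‖t‖ ^ 2 * ((p:ℝ)⁻¹ * 1) := by
            apply mul_le_mul h1 (by nlinarith) (by positivity) (by positivity)
        _ = (p:ℝ)⁻¹ * ‖t‖ ^ 2 := by ring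
  have hmaxlt : max ((p:ℝ)⁻¹ * ‖t‖^2) (‖t‖^p) < ‖t‖ * (p:ℝ)⁻¹ := by
    apply max_lt
    · nlinarith [mul_lt_mul_of_pos_left (show ‖t‖^2 < ‖t‖ by nlinarith) hppos]
    · have : ‖t‖ ^ p = ‖t‖ ^ (p-1) * ‖t‖ := by
        rw [← pow_succ]
        congr 1
        omega
      rw [this]
      nlinarith [mul_lt_mul_of_pos_right htp ht0]
  have hne : ‖t * (p:K)‖ ≠ ‖S‖ := by
    rw [hnormtp]
    exact (lt_of_le_of_lt hS hmaxlt).ne'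
  rw [hkey, norm_neg, IsUltrametricDist.norm_add_eq_max_of_norm_ne_norm hne,
    max_eq_left (le_of_lt (lt_of_le_of_lt hS (hnormtp ▸ hmaxlt))), hnormtp, ht]
  ring
end
section
variable {p : ℕ} [hp : Fact p.Prime] {K : Type*} [NormedField K] [IsUltrametricDist K]

lemma hq_pow_p (hpK : ‖(p : K)‖ = (p:ℝ)⁻¹) {q : K} (hq0 : 0 < ‖1 - q‖)
    (hq1 : ‖1 - q‖ < (p : ℝ) ^ (-(1:ℝ) / ((p:ℝ) - 1))) :
    0 < ‖1 - q ^ p‖ ∧ ‖1 - q ^ p‖ < (p : ℝ) ^ (-(1:ℝ) / ((p:ℝ) - 1)) := by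
  have h1R : (1:ℝ) < p := by exact_mod_cast hp.out.one_lt
  have h := norm_one_sub_pow_prime hpK hq0 hq1
  constructor
  · rw [h]; positivity
  · rw [h]
    have : (p:ℝ)⁻¹ * ‖1 - q‖ < ‖1 - q‖ := by
      nlinarith [inv_lt_one_of_one_lt₀ h1R]
    linarith

lemma norm_one_sub_pow_pow (hpK : ‖(p : K)‖ = (p:ℝ)⁻¹) {q : K} (hq0 : 0 < ‖1 - q‖)
    (hq1 : ‖1 - q‖ < (p : ℝ) ^ (-(1:ℝ) / ((p:ℝ) - 1))) (N : ℕ) :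
    ‖1 - q ^ (p ^ N)‖ = ((p:ℝ)⁻¹) ^ N * ‖1 - q‖ := by
  induction N with
  | zero => simp
  | succ N ih =>
    have h1R : (1:ℝ) < p := by exact_mod_cast hp.out.one_lt
    have hpi : (p:ℝ)⁻¹ ≤ 1 := by
      rw [inv_le_one_iff₀]; right; linarith
    have hq0N : 0 < ‖1 - q ^ (p ^ N)‖ := by rw [ih]; positivity
    have hq1N : ‖1 - q ^ (p ^ N)‖ < (p : ℝ) ^ (-(1:ℝ) / ((p:ℝ) - 1)) := by
      rw [ih]
      calc ((p:ℝ)⁻¹) ^ N * ‖1 - q‖ ≤ 1 * ‖1 - q‖ := by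
            apply mul_le_mul_of_nonneg_right _ (norm_nonneg _)
            exact pow_le_one₀ (by positivity) hpi
        _ < _ := by rw [one_mul]; exact hq1
    rw [pow_succ, pow_mul, norm_one_sub_pow_prime hpK hq0N hq1N, ih]
    ring

lemma norm_qpow_nat_sub_le (hpK : ‖(p : K)‖ = (p:ℝ)⁻¹) {q : K} (hq0 : 0 < ‖1 - q‖)
    (hq1 : ‖1 - q‖ < (p : ℝ) ^ (-(1:ℝ) / ((p:ℝ) - 1))) {N a b : ℕ} (hba : b ≤ a)
    (h : (p : ℤ) ^ N ∣ (a : ℤ) - (b : ℤ)) : ‖q ^ a - q ^ b‖ ≤ ((p:ℝ)⁻¹) ^ N * ‖1 - q‖ := by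
  have hlt : ‖1 - q‖ < 1 := hq1.trans rho_lt_one
  have h' : (p : ℤ) ^ N ∣ ((a - b : ℕ) : ℤ) := by rwa [Int.ofNat_sub hba]
  have h'' : p ^ N ∣ a - b := by exact_mod_cast h'
  obtain ⟨s, hs⟩ := h''
  have ha : a = b + p ^ N * s := by omega
  have hfac : q ^ a - q ^ b = q ^ b * ((q ^ (p ^ N)) ^ s - 1) := by
    rw [ha, pow_add, pow_mul]; ring
  have hqN : ‖1 - q ^ (p ^ N)‖ = ((p:ℝ)⁻¹) ^ N * ‖1 - q‖ :=
    norm_one_sub_pow_pow hpK hq0 hq1 N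
  have hltN : ‖1 - q ^ (p ^ N)‖ < 1 := by
    rw [hqN]
    have h1R : (1:ℝ) < p := by exact_mod_cast hp.out.one_lt
    have : ((p:ℝ)⁻¹) ^ N ≤ 1 := pow_le_one₀ (by positivity) (by
      rw [inv_le_one_iff₀]; right; linarith)
    nlinarith [norm_nonneg (1 - q)]
  rw [hfac, norm_mul, norm_pow, norm_q_eq_one hlt, one_pow, one_mul, ← hqN]
  exact norm_pow_sub_one hltN s

lemma norm_qpow_nat_sub (hpK : ‖(p : K)‖ = (p:ℝ)⁻¹) {q : K} (hq0 : 0 < ‖1 - q‖)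
    (hq1 : ‖1 - q‖ < (p : ℝ) ^ (-(1:ℝ) / ((p:ℝ) - 1))) {N a b : ℕ}
    (h : (p : ℤ) ^ N ∣ (a : ℤ) - (b : ℤ)) : ‖q ^ a - q ^ b‖ ≤ ((p:ℝ)⁻¹) ^ N * ‖1 - q‖ := by
  rcases le_total b a with hba | hab
  · exact norm_qpow_nat_sub_le hpK hq0 hq1 hba h
  · rw [norm_sub_rev]
    exact norm_qpow_nat_sub_le hpK hq0 hq1 hab (by rw [show (b:ℤ) - a = -((a:ℤ) - b) by ring]; exact dvd_neg.mpr h)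
end
section
variable {p : ℕ} [hp : Fact p.Prime] {K : Type*} [NormedField K] [IsUltrametricDist K]
  [CompleteSpace K]

lemma tendsto_qpow (hpK : ‖(p : K)‖ = (p:ℝ)⁻¹) {q : K} (hq0 : 0 < ‖1 - q‖)
    (hq1 : ‖1 - q‖ < (p : ℝ) ^ (-(1:ℝ) / ((p:ℝ) - 1))) (z : ℤ_[p]) :
    Tendsto (fun N : ℕ => q ^ z.appr N) atTop (nhds (qpow q z)) := by
  have h1R : (1:ℝ) < p := by exact_mod_cast hp.out.one_lt
  have hcau : CauchySeq (fun N : ℕ => q ^ z.appr N) := by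
    apply cauchySeq_of_le_geometric (p:ℝ)⁻¹ ‖1 - q‖ (inv_lt_one_of_one_lt₀ h1R)
    intro n
    rw [dist_eq_norm, mul_comm ‖1 - q‖ _]
    apply norm_qpow_nat_sub hpK hq0 hq1
    have hd := z.dvd_appr_sub_appr n (n+1) (Nat.le_succ n)
    have hm := z.appr_mono (Nat.le_succ n)
    have : (p : ℤ) ^ n ∣ ((z.appr (n+1) : ℤ) - (z.appr n : ℤ)) := by
      rw [← Int.ofNat_sub hm]
      exact_mod_cast Int.natCast_dvd_natCast.mpr hd
    rw [show (z.appr n : ℤ) - (z.appr (n+1) : ℤ)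
      = -((z.appr (n+1) : ℤ) - (z.appr n : ℤ)) by ring]
    exact dvd_neg.mpr this
  obtain ⟨L, hL⟩ := cauchySeq_tendsto_of_complete hcau
  rw [qpow, hL.limUnder_eq]
  exact hL

lemma norm_qpow_sub_appr (hpK : ‖(p : K)‖ = (p:ℝ)⁻¹) {q : K} (hq0 : 0 < ‖1 - q‖)
    (hq1 : ‖1 - q‖ < (p : ℝ) ^ (-(1:ℝ) / ((p:ℝ) - 1))) (z : ℤ_[p]) (N : ℕ) :
    ‖qpow q z - q ^ z.appr N‖ ≤ ((p:ℝ)⁻¹) ^ N * ‖1 - q‖ := by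
  have ht := tendsto_qpow hpK hq0 hq1 z
  apply le_of_tendsto (f := fun M : ℕ => ‖q ^ z.appr M - q ^ z.appr N‖)
    (((ht.sub_const _).norm))
  filter_upwards [eventually_ge_atTop N] with M hM
  apply norm_qpow_nat_sub hpK hq0 hq1
  have hd := z.dvd_appr_sub_appr N M hM
  have hm := z.appr_mono hM
  rw [← Int.ofNat_sub hm]
  exact_mod_cast Int.natCast_dvd_natCast.mpr hd

lemma norm_one_sub_qpow (hpK : ‖(p : K)‖ = (p:ℝ)⁻¹) {q : K} (hq0 : 0 < ‖1 - q‖)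
    (hq1 : ‖1 - q‖ < (p : ℝ) ^ (-(1:ℝ) / ((p:ℝ) - 1))) (z : ℤ_[p]) :
    ‖1 - qpow q z‖ ≤ ‖1 - q‖ := by
  have hlt : ‖1 - q‖ < 1 := hq1.trans rho_lt_one
  have ht : Tendsto (fun N : ℕ => ‖1 - q ^ z.appr N‖) atTop (nhds ‖1 - qpow q z‖) :=
    ((tendsto_const_nhds.sub (tendsto_qpow hpK hq0 hq1 z)).norm)
  apply le_of_tendsto ht
  filter_upwards with N
  rw [norm_sub_rev]
  exact norm_pow_sub_one hlt _

lemma norm_qpow_sub_qpow (hpK : ‖(p : K)‖ = (p:ℝ)⁻¹) {q : K} (hq0 : 0 < ‖1 - q‖)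
    (hq1 : ‖1 - q‖ < (p : ℝ) ^ (-(1:ℝ) / ((p:ℝ) - 1))) {N : ℕ} {z z' : ℤ_[p]}
    (h : (p : ℤ_[p]) ^ N ∣ z - z') :
    ‖qpow q z - qpow q z'‖ ≤ ((p:ℝ)⁻¹) ^ N * ‖1 - q‖ := by
  set a := z.appr N
  set b := z'.appr N
  have hd1 : (p : ℤ_[p]) ^ N ∣ z - (a : ℤ_[p]) :=
    Ideal.mem_span_singleton.mp (z.appr_spec N)
  have hd2 : (p : ℤ_[p]) ^ N ∣ z' - (b : ℤ_[p]) :=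
    Ideal.mem_span_singleton.mp (z'.appr_spec N)
  have hdab : (p : ℤ_[p]) ^ N ∣ ((a : ℤ_[p]) - (b : ℤ_[p])) := by
    have : (a : ℤ_[p]) - (b : ℤ_[p]) = -(z - (a:ℤ_[p])) + (z - z') + (z' - (b:ℤ_[p])) := by ring
    rw [this]
    exact dvd_add (dvd_add (dvd_neg.mpr hd1) h) hd2
  have hdabZ : (p : ℤ) ^ N ∣ (a : ℤ) - (b : ℤ) := by
    rw [← PadicInt.norm_int_le_pow_iff_dvd]
    obtain ⟨c, hc⟩ := hdab
    have : (((a : ℤ) - (b : ℤ) : ℤ) : ℤ_[p]) = (p : ℤ_[p]) ^ N * c := by push_cast; push_cast at hc; exact hc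
    rw [this, norm_mul, PadicInt.norm_p_pow]
    calc (p:ℝ) ^ (-N : ℤ) * ‖c‖ ≤ (p:ℝ) ^ (-N : ℤ) * 1 := by
          apply mul_le_mul_of_nonneg_left c.norm_le_one (by positivity)
      _ = _ := mul_one _
  have hmid : ‖q ^ a - q ^ b‖ ≤ ((p:ℝ)⁻¹) ^ N * ‖1 - q‖ :=
    norm_qpow_nat_sub hpK hq0 hq1 hdabZ
  have h1 := norm_qpow_sub_appr hpK hq0 hq1 z N
  have h2 := norm_qpow_sub_appr hpK hq0 hq1 z' N
  have hsplit : qpow q z - qpow q z'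
      = (qpow q z - q ^ a) + ((q ^ a - q ^ b) + (q ^ b - qpow q z')) := by ring
  rw [hsplit]
  refine le_trans (IsUltrametricDist.norm_add_le_max _ _) (max_le h1 ?_)
  refine le_trans (IsUltrametricDist.norm_add_le_max _ _) (max_le hmid ?_)
  rw [norm_sub_rev]
  exact h2
end
section
variable {p : ℕ} [hp : Fact p.Prime] {K : Type*} [NormedField K] [IsUltrametricDist K]
  [CompleteSpace K]

lemma qpow_p_mul (hpK : ‖(p : K)‖ = (p:ℝ)⁻¹) {q : K} (hq0 : 0 < ‖1 - q‖)
    (hq1 : ‖1 - q‖ < (p : ℝ) ^ (-(1:ℝ) / ((p:ℝ) - 1))) (w : ℤ_[p]) :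
    qpow q ((p : ℤ_[p]) * w) = qpow (q ^ p) w := by
  have h1R : (1:ℝ) < p := by exact_mod_cast hp.out.one_lt
  obtain ⟨hq0p, hq1p⟩ := hq_pow_p hpK hq0 hq1
  have h1 : Tendsto (fun N : ℕ => (q ^ p) ^ w.appr N) atTop (nhds (qpow (q ^ p) w)) :=
    tendsto_qpow hpK hq0p hq1p w
  have hb : ∀ N : ℕ, ‖q ^ (((p : ℤ_[p]) * w).appr N) - (q ^ p) ^ w.appr N‖
      ≤ ((p:ℝ)⁻¹) ^ N * ‖1 - q‖ := by
    intro N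
    rw [← pow_mul]
    apply norm_qpow_nat_sub hpK hq0 hq1
    rw [← PadicInt.norm_int_le_pow_iff_dvd]
    have hd1 : (p : ℤ_[p]) ^ N ∣ ((p : ℤ_[p]) * w - (((p : ℤ_[p]) * w).appr N : ℤ_[p])) :=
      Ideal.mem_span_singleton.mp (((p : ℤ_[p]) * w).appr_spec N)
    have hd2 : (p : ℤ_[p]) ^ N ∣ (w - (w.appr N : ℤ_[p])) :=
      Ideal.mem_span_singleton.mp (w.appr_spec N)
    have hdvd : (p : ℤ_[p]) ^ N ∣
        ((((p : ℤ_[p]) * w).appr N : ℤ_[p]) - (p : ℤ_[p]) * (w.appr N : ℤ_[p])) := by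
      have heq : (((p : ℤ_[p]) * w).appr N : ℤ_[p]) - (p : ℤ_[p]) * (w.appr N : ℤ_[p])
          = -((p : ℤ_[p]) * w - (((p : ℤ_[p]) * w).appr N : ℤ_[p]))
            + (p : ℤ_[p]) * (w - (w.appr N : ℤ_[p])) := by ring
      rw [heq]
      exact dvd_add (dvd_neg.mpr hd1) (Dvd.dvd.mul_left hd2 _)
    obtain ⟨c, hc⟩ := hdvd
    have : (((((p : ℤ_[p]) * w).appr N : ℤ) - ((p * w.appr N : ℕ) : ℤ) : ℤ) : ℤ_[p])
        = (p : ℤ_[p]) ^ N * c := by push_cast; push_cast at hc; linear_combination hc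
    rw [this, norm_mul, PadicInt.norm_p_pow]
    calc (p:ℝ) ^ (-N : ℤ) * ‖c‖ ≤ (p:ℝ) ^ (-N : ℤ) * 1 := by
          apply mul_le_mul_of_nonneg_left c.norm_le_one (by positivity)
      _ = _ := mul_one _
  have h0 : Tendsto (fun N : ℕ => q ^ (((p : ℤ_[p]) * w).appr N) - (q ^ p) ^ w.appr N)
      atTop (nhds 0) := by
    apply squeeze_zero_norm hb
    have := (tendsto_pow_atTop_nhds_zero_of_lt_one (by positivity : (0:ℝ) ≤ (p:ℝ)⁻¹)
      (inv_lt_one_of_one_lt₀ h1R)).mul_const ‖1 - q‖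
    simpa using this
  have h2 : Tendsto (fun N : ℕ => q ^ (((p : ℤ_[p]) * w).appr N)) atTop (nhds (qpow (q ^ p) w)) := by
    have := h0.add h1
    simpa using this
  rw [qpow, h2.limUnder_eq]

lemma norm_qnum_le_one (hpK : ‖(p : K)‖ = (p:ℝ)⁻¹) {q : K} (hq0 : 0 < ‖1 - q‖)
    (hq1 : ‖1 - q‖ < (p : ℝ) ^ (-(1:ℝ) / ((p:ℝ) - 1))) (z : ℤ_[p]) :
    ‖qnum q z‖ ≤ 1 := by
  rw [qnum, norm_div]
  exact div_le_one_of_le₀ (norm_one_sub_qpow hpK hq0 hq1 z) (norm_nonneg _)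

lemma norm_qnum_sub_qnum (hpK : ‖(p : K)‖ = (p:ℝ)⁻¹) {q : K} (hq0 : 0 < ‖1 - q‖)
    (hq1 : ‖1 - q‖ < (p : ℝ) ^ (-(1:ℝ) / ((p:ℝ) - 1))) {N : ℕ} {z z' : ℤ_[p]}
    (h : (p : ℤ_[p]) ^ N ∣ z - z') :
    ‖qnum q z - qnum q z'‖ ≤ ((p:ℝ)⁻¹) ^ N := by
  have heq : qnum q z - qnum q z' = (qpow q z' - qpow q z) / (1 - q) := by
    rw [qnum, qnum, div_sub_div_same]
    congr 1
    ring
  rw [heq, norm_div, div_le_iff₀ hq0]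
  rw [norm_sub_rev]
  exact norm_qpow_sub_qpow hpK hq0 hq1 h

lemma norm_pow_sub_pow_le (a b : K) (ha : ‖a‖ ≤ 1) (hb : ‖b‖ ≤ 1) (k : ℕ) :
    ‖a ^ k - b ^ k‖ ≤ ‖a - b‖ := by
  rw [← geom_sum₂_mul a b k, norm_mul]
  have h1 : ‖∑ i ∈ Finset.range k, a ^ i * b ^ (k - 1 - i)‖ ≤ 1 := by
    apply IsUltrametricDist.norm_sum_le_of_forall_le_of_nonneg zero_le_one
    intro i _
    rw [norm_mul, norm_pow, norm_pow]
    have h2 : ‖a‖ ^ i ≤ 1 := pow_le_one₀ (norm_nonneg _) ha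
    have h3 : ‖b‖ ^ (k - 1 - i) ≤ 1 := pow_le_one₀ (norm_nonneg _) hb
    nlinarith [pow_nonneg (norm_nonneg a) i, pow_nonneg (norm_nonneg b) (k-1-i)]
  nlinarith [norm_nonneg (a - b), norm_nonneg (∑ i ∈ Finset.range k, a ^ i * b ^ (k - 1 - i))]

lemma norm_qnum_pow_sub (hpK : ‖(p : K)‖ = (p:ℝ)⁻¹) {q : K} (hq0 : 0 < ‖1 - q‖)
    (hq1 : ‖1 - q‖ < (p : ℝ) ^ (-(1:ℝ) / ((p:ℝ) - 1))) {N : ℕ} {z z' : ℤ_[p]} (k : ℕ)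
    (h : (p : ℤ_[p]) ^ N ∣ z - z') :
    ‖qnum q z ^ k - qnum q z' ^ k‖ ≤ ((p:ℝ)⁻¹) ^ N :=
  le_trans
    (norm_pow_sub_pow_le _ _ (norm_qnum_le_one hpK hq0 hq1 z) (norm_qnum_le_one hpK hq0 hq1 z') k)
    (norm_qnum_sub_qnum hpK hq0 hq1 h)

end
set_option linter.unusedSectionVars false

section
variable {p : ℕ} [hp : Fact p.Prime] {K : Type*} [NormedField K] [IsUltrametricDist K]

lemma norm_dirichlet_le_one {d : ℕ} (hd : 1 ≤ d) (χ : DirichletCharacter K d) (a : ZMod d) :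
    ‖χ a‖ ≤ 1 := by
  haveI : NeZero d := ⟨by omega⟩
  by_cases h : IsUnit a
  · obtain ⟨v, rfl⟩ := h
    have h1 : χ (v : ZMod d) ^ d.totient = 1 := by
      rw [← map_pow, ← Units.val_pow_eq_pow_val, ZMod.pow_totient, Units.val_one, map_one]
    have h2 : ‖χ (v : ZMod d)‖ ^ d.totient = 1 := by rw [← norm_pow, h1, norm_one]
    have ht : d.totient ≠ 0 := (Nat.totient_pos.mpr (by omega)).ne'
    by_contra hcon
    push_neg at hcon
    have : (1:ℝ) < ‖χ (v : ZMod d)‖ ^ d.totient := one_lt_pow₀ hcon ht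
    rw [h2] at this
    exact lt_irrefl _ this
  · rw [χ.map_nonunit h, norm_zero]
    exact zero_le_one

lemma norm_pref_mul_upow {u : K} (hu : ∀ f : ℕ, 1 ≤ f → 1 ≤ ‖1 - u ^ f‖) {m x : ℕ}
    (hm : 1 ≤ m) (hx : x < m) : ‖(1 - u) / (1 - u ^ m) * u ^ x‖ ≤ 1 := by
  have hm' := hu m hm
  rw [norm_mul, norm_div, norm_pow]
  rcases le_or_gt ‖u‖ 1 with h | h
  · have hnum : ‖1 - u‖ ≤ 1 := by
      have heq : (1:K) - u = 1 + -u := by ring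
      rw [heq]
      refine le_trans (IsUltrametricDist.norm_add_le_max _ _) ?_
      rw [norm_one, norm_neg]
      exact max_le le_rfl h
    have h1 : ‖1 - u‖ / ‖1 - u ^ m‖ ≤ 1 := div_le_one_of_le₀ (hnum.trans hm') (norm_nonneg _)
    have h2 : ‖u‖ ^ x ≤ 1 := pow_le_one₀ (norm_nonneg _) h
    nlinarith [div_nonneg (norm_nonneg (1-u)) (norm_nonneg (1-u^m)), pow_nonneg (norm_nonneg u) x]
  · have he : ∀ f : ℕ, 1 ≤ f → ‖1 - u ^ f‖ = ‖u‖ ^ f := by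
      intro f hf
      have heq : (1:K) - u ^ f = 1 + -(u ^ f) := by ring
      have hgt : (1:ℝ) < ‖u‖ ^ f := one_lt_pow₀ h (by omega)
      rw [heq, IsUltrametricDist.norm_add_eq_max_of_norm_ne_norm
        (by rw [norm_one, norm_neg, norm_pow]; exact hgt.ne), norm_one, norm_neg, norm_pow]
      exact max_eq_right hgt.le
    have h1 : ‖1 - u‖ = ‖u‖ := by simpa using he 1 le_rfl
    rw [h1, he m hm, div_mul_eq_mul_div, ← pow_succ']
    apply div_le_one_of_le₀ _ (by positivity)
    exact pow_le_pow_right₀ h.le hx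

lemma sum_range_mul_eq {β : Type*} [AddCommMonoid β] (f : ℕ → β) (m n : ℕ) :
    ∑ x ∈ Finset.range (m * n), f x = ∑ j ∈ Finset.range n, ∑ y ∈ Finset.range m, f (m * j + y) := by
  induction n with
  | zero => simp
  | succ n ih => rw [Nat.mul_succ, Finset.sum_range_add, ih, Finset.sum_range_succ]
end
section
variable {p : ℕ} [hp : Fact p.Prime] {K : Type*} [NormedField K] [IsUltrametricDist K]
  [CompleteSpace K]

lemma main_conv (hpK : ‖(p : K)‖ = (p:ℝ)⁻¹) (a1 : ℤ_[p]) {u q : K}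
    (hu : ∀ f : ℕ, 1 ≤ f → 1 ≤ ‖1 - u ^ f‖)
    (hq0 : 0 < ‖1 - q‖) (hq1 : ‖1 - q‖ < (p : ℝ) ^ (-(1:ℝ) / ((p:ℝ) - 1)))
    {d : ℕ} (hd : 1 ≤ d) (χ : DirichletCharacter K d) (k : ℕ) :
    ∃ L : K, Tendsto (fun N : ℕ => ((1 - u) / (1 - u ^ (d * p ^ N))) *
        ∑ x ∈ Finset.range (d * p ^ N),
          χ ((x : ZMod d)) * (qnum q (a1 * (x : ℤ_[p]))) ^ k * u ^ x) atTop (nhds L) := by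
  have h1R : (1:ℝ) < p := by exact_mod_cast hp.out.one_lt
  have hppos : 0 < p := hp.out.pos
  set g : ℕ → K := fun x => χ ((x : ZMod d)) * (qnum q (a1 * (x : ℤ_[p]))) ^ k * u ^ x with hg
  have hune : ∀ f : ℕ, 1 ≤ f → (1:K) - u ^ f ≠ 0 := by
    intro f hf h0
    have := hu f hf
    rw [h0, norm_zero] at this
    linarith
  suffices h : CauchySeq (fun N : ℕ => ((1 - u) / (1 - u ^ (d * p ^ N))) *
      ∑ x ∈ Finset.range (d * p ^ N), g x) from cauchySeq_tendsto_of_complete h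
  apply cauchySeq_of_le_geometric (p:ℝ)⁻¹ 1 (inv_lt_one_of_one_lt₀ h1R)
  intro N
  rw [dist_eq_norm', one_mul]
  set m : ℕ := d * p ^ N with hm
  have hm1 : 1 ≤ m := by
    have : 1 ≤ p ^ N := Nat.one_le_pow _ _ hppos
    calc 1 = 1 * 1 := by ring
    _ ≤ d * p ^ N := Nat.mul_le_mul hd this
  have hmp1 : 1 ≤ m * p := le_trans hm1 (Nat.le_mul_of_pos_right _ hppos)
  have hmp : d * p ^ (N+1) = m * p := by rw [hm, pow_succ]; ring
  have hαne : (1:K) - u ^ m ≠ 0 := hune m hm1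
  have hβne : (1:K) - u ^ (m * p) ≠ 0 := hune (m * p) hmp1
  have hgeom : ∑ j ∈ Finset.range p, (u ^ m) ^ j = (1 - u ^ (m * p)) / (1 - u ^ m) := by
    rw [geom_sum_eq (fun h => hαne (by rw [h]; ring)), ← pow_mul]
    rw [div_eq_div_iff (fun h0 => hαne (by
      have : u ^ m - 1 = 0 := h0
      have h1 : (1:K) - u ^ m = -(u ^ m - 1) := by ring
      rw [h1, this]; ring)) hαne]
    ring
  set S : K := ∑ y ∈ Finset.range m, g y with hS
  set c : K := (1 - u) / (1 - u ^ (m * p)) with hc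
  have e2 : c * ∑ j ∈ Finset.range p, ∑ y ∈ Finset.range m, u ^ (m * j) * g y
      = ((1 - u) / (1 - u ^ m)) * S := by
    have einner : ∑ j ∈ Finset.range p, ∑ y ∈ Finset.range m, u ^ (m * j) * g y
        = (∑ j ∈ Finset.range p, (u ^ m) ^ j) * S := by
      rw [Finset.sum_mul]
      refine Finset.sum_congr rfl fun j _ => ?_
      rw [← Finset.mul_sum, pow_mul]
    rw [einner, hgeom, hc]
    field_simp
  have key : ((1 - u) / (1 - u ^ (d * p ^ (N+1)))) * ∑ x ∈ Finset.range (d * p ^ (N+1)), g x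
      - ((1 - u) / (1 - u ^ m)) * S
      = ∑ j ∈ Finset.range p, ∑ y ∈ Finset.range m, c * (g (m * j + y) - u ^ (m * j) * g y) := by
    rw [hmp, sum_range_mul_eq g m p, ← e2, ← mul_sub, ← Finset.sum_sub_distrib, Finset.mul_sum]
    refine Finset.sum_congr rfl fun j _ => ?_
    rw [← Finset.sum_sub_distrib, Finset.mul_sum]
  calc ‖((1 - u) / (1 - u ^ (d * p ^ (N+1)))) * ∑ x ∈ Finset.range (d * p ^ (N+1)), g x
      - ((1 - u) / (1 - u ^ m)) * S‖
      = ‖∑ j ∈ Finset.range p, ∑ y ∈ Finset.range m, c * (g (m * j + y) - u ^ (m * j) * g y)‖ := by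
        rw [key]
    _ ≤ ((p:ℝ)⁻¹) ^ N := by
        apply IsUltrametricDist.norm_sum_le_of_forall_le_of_nonneg (by positivity)
        intro j hj
        apply IsUltrametricDist.norm_sum_le_of_forall_le_of_nonneg (by positivity)
        intro y hy
        have hjp : j < p := Finset.mem_range.mp hj
        have hym : y < m := Finset.mem_range.mp hy
        have hm0 : ((m : ℕ) : ZMod d) = 0 := by
          rw [hm]; push_cast [ZMod.natCast_self]; ring
        have hcast : ((m * j + y : ℕ) : ZMod d) = ((y : ℕ) : ZMod d) := by
          push_cast [hm0]; ring
        have hterm : g (m * j + y) - u ^ (m * j) * g y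
            = (χ ((y : ZMod d)) * (qnum q (a1 * ((m * j + y : ℕ) : ℤ_[p])) ^ k
                - qnum q (a1 * ((y : ℕ) : ℤ_[p])) ^ k)) * u ^ (m * j + y) := by
          simp only [hg]
          rw [hcast, pow_add]
          ring
        have hdvd : (p : ℤ_[p]) ^ N ∣ a1 * ((m * j + y : ℕ) : ℤ_[p]) - a1 * ((y : ℕ) : ℤ_[p]) := by
          refine ⟨a1 * d * j, ?_⟩
          rw [hm]
          push_cast
          ring
        have hΔ : ‖qnum q (a1 * ((m * j + y : ℕ) : ℤ_[p])) ^ k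
            - qnum q (a1 * ((y : ℕ) : ℤ_[p])) ^ k‖ ≤ ((p:ℝ)⁻¹) ^ N :=
          norm_qnum_pow_sub hpK hq0 hq1 k hdvd
        have hxlt : m * j + y < m * p := by
          calc m * j + y < m * j + m := by omega
          _ = m * (j + 1) := by ring
          _ ≤ m * p := Nat.mul_le_mul_left _ (by omega)
        have hupart : ‖c * u ^ (m * j + y)‖ ≤ 1 := by
          rw [hc]
          exact norm_pref_mul_upow hu hmp1 hxlt
        have hre : c * (g (m * j + y) - u ^ (m * j) * g y)
            = (c * u ^ (m * j + y)) * (χ ((y : ZMod d)) * (qnum q (a1 * ((m * j + y : ℕ) : ℤ_[p])) ^ k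
                - qnum q (a1 * ((y : ℕ) : ℤ_[p])) ^ k)) := by
          rw [hterm]; ring
        rw [hre, norm_mul, norm_mul]
        have hχ : ‖χ ((y : ZMod d))‖ ≤ 1 := norm_dirichlet_le_one hd χ _
        have hinner := mul_le_mul hχ hΔ (norm_nonneg _) zero_le_one
        have := mul_le_mul hupart hinner (by positivity) zero_le_one
        simpa using this
end
/-- **removing the `p`-part of the integral.** For `k ≥ 0`, the limit
`∫_{X^*} χ(x)[a_1 x:q]^k dμ_u(x)
  = lim_N ((1-u)/(1-u^{d p^N})) ∑_{0 ≤ x < d p^N, p ∤ x} χ(x)[a_1 x:q]^k u^x`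
exists and equals `I_χ(k;u,q) - χ(p) [p:q]^k ((1-u)/(1-u^p)) I_χ(k;u^p,q^p)`, where
`I_χ(k;u',q') = lim_N ((1-u')/(1-u'^{d p^N})) ∑_{x=0}^{d p^N-1} χ(x)[a_1 x:q']^k u'^x`
(all three limits exist). -/
theorem integral_units_part_eq
    {p : ℕ} [Fact p.Prime] {K : Type*} [NormedField K] [CompleteSpace K]
    [IsUltrametricDist K] (hpK : ‖(p : K)‖ = (p : ℝ)⁻¹)
    (a1 : ℤ_[p]) (ha1 : a1 ≠ 0)
    (u q : K) (hu : ∀ f : ℕ, 1 ≤ f → 1 ≤ ‖1 - u ^ f‖)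
    (hq0 : 0 < ‖1 - q‖) (hq1 : ‖1 - q‖ < (p : ℝ) ^ (-(1 : ℝ) / ((p : ℝ) - 1)))
    (d : ℕ) (hd : 1 ≤ d) (χ : DirichletCharacter K d) (k : ℕ) :
    ∃ L Lfull Lp : K,
      Tendsto
        (fun N : ℕ =>
          ((1 - u) / (1 - u ^ (d * p ^ N))) *
            ∑ x ∈ (Finset.range (d * p ^ N)).filter fun x => ¬ p ∣ x,
              χ ((x : ZMod d)) * (qnum q (a1 * (x : ℤ_[p]))) ^ k * u ^ x)
        atTop (nhds L) ∧
      Tendsto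
        (fun N : ℕ =>
          ((1 - u) / (1 - u ^ (d * p ^ N))) *
            ∑ x ∈ Finset.range (d * p ^ N),
              χ ((x : ZMod d)) * (qnum q (a1 * (x : ℤ_[p]))) ^ k * u ^ x)
        atTop (nhds Lfull) ∧
      Tendsto
        (fun N : ℕ =>
          ((1 - u ^ p) / (1 - (u ^ p) ^ (d * p ^ N))) *
            ∑ x ∈ Finset.range (d * p ^ N),
              χ ((x : ZMod d)) * (qnum (q ^ p) (a1 * (x : ℤ_[p]))) ^ k * (u ^ p) ^ x)
        atTop (nhds Lp) ∧
      L = Lfull -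
        χ ((p : ZMod d)) * ((1 - q ^ p) / (1 - q)) ^ k * ((1 - u) / (1 - u ^ p)) * Lp := by
  have hp' : p.Prime := Fact.out
  have hppos : 0 < p := hp'.pos
  obtain ⟨hq0p, hq1p⟩ := hq_pow_p hpK hq0 hq1
  have hup : ∀ f : ℕ, 1 ≤ f → 1 ≤ ‖1 - (u ^ p) ^ f‖ := by
    intro f hf
    rw [← pow_mul]
    exact hu (p * f) (Nat.one_le_iff_ne_zero.mpr (by positivity))
  have hune : ∀ f : ℕ, 1 ≤ f → (1 : K) - u ^ f ≠ 0 := by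
    intro f hf h0
    have := hu f hf
    rw [h0, norm_zero] at this
    linarith
  have hqne : (1 : K) - q ≠ 0 := by
    intro h0; rw [h0, norm_zero] at hq0; exact lt_irrefl _ hq0
  have hqpne : (1 : K) - q ^ p ≠ 0 := by
    intro h0; rw [h0, norm_zero] at hq0p; exact lt_irrefl _ hq0p
  obtain ⟨Lfull, hLfull⟩ := main_conv hpK a1 hu hq0 hq1 hd χ k
  obtain ⟨Lp, hLp⟩ := main_conv hpK a1 hup hq0p hq1p hd χ k
  set C : K := χ ((p : ZMod d)) * ((1 - q ^ p) / (1 - q)) ^ k * ((1 - u) / (1 - u ^ p)) with hC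
  refine ⟨Lfull - C * Lp, Lfull, Lp, ?_, hLfull, hLp, by rw [hC]⟩
  have hcomp : Tendsto (fun N : ℕ =>
      ((1 - u ^ p) / (1 - (u ^ p) ^ (d * p ^ (N - 1)))) *
        ∑ x ∈ Finset.range (d * p ^ (N - 1)),
          χ ((x : ZMod d)) * (qnum (q ^ p) (a1 * (x : ℤ_[p]))) ^ k * (u ^ p) ^ x)
      atTop (nhds Lp) := hLp.comp (tendsto_sub_atTop_nat 1)
  have htarget : Tendsto (fun N : ℕ =>
      (((1 - u) / (1 - u ^ (d * p ^ N))) *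
        ∑ x ∈ Finset.range (d * p ^ N),
          χ ((x : ZMod d)) * (qnum q (a1 * (x : ℤ_[p]))) ^ k * u ^ x)
      - C * (((1 - u ^ p) / (1 - (u ^ p) ^ (d * p ^ (N - 1)))) *
        ∑ x ∈ Finset.range (d * p ^ (N - 1)),
          χ ((x : ZMod d)) * (qnum (q ^ p) (a1 * (x : ℤ_[p]))) ^ k * (u ^ p) ^ x))
      atTop (nhds (Lfull - C * Lp)) := hLfull.sub (hcomp.const_mul C)
  refine Tendsto.congr' ?_ htarget
  filter_upwards [eventually_ge_atTop 1] with N hN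
  obtain ⟨M, rfl⟩ : ∃ M, N = M + 1 := ⟨N - 1, by omega⟩
  simp only [Nat.add_sub_cancel]
  -- notation
  set g : ℕ → K := fun x => χ ((x : ZMod d)) * (qnum q (a1 * (x : ℤ_[p]))) ^ k * u ^ x with hg
  have hqnum_p : ∀ w : ℤ_[p], qnum q ((p : ℤ_[p]) * w) = ((1 - q ^ p) / (1 - q)) * qnum (q ^ p) w := by
    intro w
    rw [qnum, qnum, qpow_p_mul hpK hq0 hq1 w]
    field_simp
  have hterm : ∀ y : ℕ, g (p * y) = (χ ((p : ZMod d)) * ((1 - q ^ p) / (1 - q)) ^ k) *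
      (χ ((y : ZMod d)) * (qnum (q ^ p) (a1 * (y : ℤ_[p]))) ^ k * (u ^ p) ^ y) := by
    intro y
    have h1 : ((p * y : ℕ) : ZMod d) = (p : ZMod d) * ((y : ℕ) : ZMod d) := by push_cast; ring
    have h2 : a1 * ((p * y : ℕ) : ℤ_[p]) = (p : ℤ_[p]) * (a1 * ((y : ℕ) : ℤ_[p])) := by
      push_cast; ring
    simp only [hg]
    rw [h1, map_mul, h2, hqnum_p, mul_pow, ← pow_mul]
    ring
  have hbij : ∑ x ∈ (Finset.range (d * p ^ (M + 1))).filter (fun x => p ∣ x), g x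
      = ∑ y ∈ Finset.range (d * p ^ M), g (p * y) := by
    refine (Finset.sum_nbij' (fun y => p * y) (fun x => x / p) ?_ ?_ ?_ ?_ ?_).symm
    · intro y hy
      rw [Finset.mem_filter, Finset.mem_range]
      rw [Finset.mem_range] at hy
      constructor
      · calc p * y < p * (d * p ^ M) := (Nat.mul_lt_mul_left hppos).mpr hy
        _ = d * p ^ (M + 1) := by ring
      · exact Dvd.intro y rfl
    · intro x hx
      rw [Finset.mem_filter, Finset.mem_range] at hx
      rw [Finset.mem_range]
      refine (Nat.div_lt_iff_lt_mul hppos).mpr ?_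
      calc x < d * p ^ (M + 1) := hx.1
      _ = d * p ^ M * p := by ring
    · intro y _
      exact Nat.mul_div_cancel_left y hppos
    · intro x hx
      rw [Finset.mem_filter] at hx
      exact Nat.mul_div_cancel' hx.2
    · intro y _
      rfl
  have hsum : ∑ x ∈ (Finset.range (d * p ^ (M + 1))).filter (fun x => p ∣ x), g x
      = (χ ((p : ZMod d)) * ((1 - q ^ p) / (1 - q)) ^ k) *
        ∑ y ∈ Finset.range (d * p ^ M),
          χ ((y : ZMod d)) * (qnum (q ^ p) (a1 * (y : ℤ_[p]))) ^ k * (u ^ p) ^ y := by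
    rw [hbij]
    rw [Finset.sum_congr rfl (fun y _ => hterm y), ← Finset.mul_sum]
  have hβ : (u ^ p) ^ (d * p ^ M) = u ^ (d * p ^ (M + 1)) := by
    rw [← pow_mul]
    congr 1
    ring
  have hupne : (1 : K) - u ^ p ≠ 0 := hune p hppos
  have hXne : (1 : K) - u ^ (d * p ^ (M + 1)) ≠ 0 := by
    apply hune
    have h1 : 1 ≤ p ^ (M + 1) := Nat.one_le_pow _ _ hppos
    calc 1 = 1 * 1 := by ring
    _ ≤ d * p ^ (M + 1) := Nat.mul_le_mul hd h1
  have hpref : (1 - u) / (1 - u ^ (d * p ^ (M + 1)))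
      = ((1 - u) / (1 - u ^ p)) * ((1 - u ^ p) / (1 - (u ^ p) ^ (d * p ^ M))) := by
    rw [hβ]
    field_simp
  have hfilter : ∑ x ∈ (Finset.range (d * p ^ (M + 1))).filter (fun x => ¬ p ∣ x), g x
      = ∑ x ∈ Finset.range (d * p ^ (M + 1)), g x
        - ∑ x ∈ (Finset.range (d * p ^ (M + 1))).filter (fun x => p ∣ x), g x := by
    rw [← Finset.sum_filter_add_sum_filter_not (Finset.range (d * p ^ (M + 1))) (fun x => p ∣ x) g]
    ring
  rw [hfilter, mul_sub, hsum, hpref, hC]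
  ring
end
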